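/- arXiv:1607.06444 — 5 statements merged into one kernel-verified Lean document; each statement's English description precedes it below -/
import Mathlib

section
/- If a graph G admits a straight-line drawing in ℝ² in which all edges are covered by k lines, then G has at most k(k-1)/2 vertices of degree at least 3. -/
/-- `L` is a line in `ℝ^d`. -/
def IsLine {d : ℕ} (L : Set (Fin d → ℝ)) : Prop :=
  ∃ p v : Fin d → ℝ, v ≠ 0 ∧ L = {x | ∃ t : ℝ, x = p + t • v}

/-- A `k`-line cover of a graph `G` in `ℝ^d`: a crossing-free straight-line drawing of
`G` together with `k` lines whose union contains the drawing (all vertices and edges). -/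
structure LineCover {V : Type*} (G : SimpleGraph V) (d k : ℕ) where
  pos : V → (Fin d → ℝ)
  inj : Function.Injective pos
  lines : Fin k → Set (Fin d → ℝ)
  isLine : ∀ i, IsLine (lines i)
  coversV : ∀ v, ∃ i, pos v ∈ lines i
  coversE : ∀ ⦃u v⦄, G.Adj u v → ∃ i, segment ℝ (pos u) (pos v) ⊆ lines i
  noCross : ∀ ⦃u v a b⦄, G.Adj u v → G.Adj a b → ({u, v} : Set V) ≠ {a, b} →
    ∀ x ∈ segment ℝ (pos u) (pos v) ∩ segment ℝ (pos a) (pos b),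
      ∃ w, (w = u ∨ w = v) ∧ (w = a ∨ w = b) ∧ x = pos w

/-- The line cover number `ρ¹_d(G)`: the minimum number of lines in `ℝ^d` whose union
contains a crossing-free straight-line drawing of `G`. -/
noncomputable def rho1 {V : Type*} (G : SimpleGraph V) (d : ℕ) : ℕ :=
  sInf {k | Nonempty (LineCover G d k)}

/-- Injectivity of the line parametrization. -/
lemma param_inj {d : ℕ} {p v : Fin d → ℝ} (hv : v ≠ 0) {s t : ℝ}
    (h : p + s • v = p + t • v) : s = t := by
  have h2 : (s - t) • v = 0 := by
    funext i
    have := congrFun h i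
    simp only [Pi.add_apply, Pi.smul_apply, smul_eq_mul, Pi.zero_apply] at this ⊢
    nlinarith [this]
  rcases smul_eq_zero.mp h2 with h4 | h4
  · linarith [sub_eq_zero.mp h4]
  · exact absurd h4 hv

/-- Points with parameter between two parameters lie on the segment. -/
lemma mem_seg_param {d : ℕ} (p v : Fin d → ℝ) {t1 t2 t : ℝ} (h1 : t1 ≤ t) (h2 : t ≤ t2) :
    p + t • v ∈ segment ℝ (p + t1 • v) (p + t2 • v) := by
  rcases eq_or_lt_of_le (h1.trans h2) with heq | hlt
  · have ht : t = t1 := le_antisymm (heq ▸ h2) h1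
    rw [ht]; exact left_mem_segment ℝ _ _
  · set u : ℝ := (t - t1) / (t2 - t1) with hu
    have hne : t2 - t1 ≠ 0 := by linarith
    have hu0 : 0 ≤ u := div_nonneg (by linarith) (by linarith)
    have hu1 : u ≤ 1 := by
      rw [hu, div_le_one (by linarith)]; linarith
    refine ⟨1 - u, u, by linarith, hu0, by ring, ?_⟩
    funext i
    simp only [Pi.add_apply, Pi.smul_apply, smul_eq_mul]
    have hmul : u * (t2 - t1) = t - t1 := div_mul_cancel₀ _ hne
    linear_combination (v i) * hmul

/-- A line through two distinct points is determined by them. -/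
lemma line_eq_of_two {d : ℕ} {L : Set (Fin d → ℝ)} (hL : IsLine L) {x y : Fin d → ℝ}
    (hx : x ∈ L) (hy : y ∈ L) (hxy : x ≠ y) :
    L = {z | ∃ t : ℝ, z = x + t • (y - x)} := by
  obtain ⟨p, v, hv, rfl⟩ := hL
  obtain ⟨tx, hxe⟩ := hx
  obtain ⟨ty, hye⟩ := hy
  have htne : ty - tx ≠ 0 := by
    intro hc
    apply hxy
    rw [hxe, hye, sub_eq_zero.mp hc]
  ext z
  simp only [Set.mem_setOf_eq]
  constructor
  · rintro ⟨t, rfl⟩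
    refine ⟨(t - tx) / (ty - tx), ?_⟩
    funext i
    rw [hxe, hye]
    simp only [Pi.add_apply, Pi.smul_apply, Pi.sub_apply, smul_eq_mul]
    field_simp
    ring
  · rintro ⟨t, rfl⟩
    refine ⟨tx + t * (ty - tx), ?_⟩
    funext i
    rw [hxe, hye]
    simp only [Pi.add_apply, Pi.smul_apply, Pi.sub_apply, smul_eq_mul]
    ring

/-- Two distinct lines meet in at most one point. -/
lemma line_inter_subsingleton {d : ℕ} {L1 L2 : Set (Fin d → ℝ)} (h1 : IsLine L1)
    (h2 : IsLine L2) (hne : L1 ≠ L2) {x y : Fin d → ℝ}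
    (hx1 : x ∈ L1) (hx2 : x ∈ L2) (hy1 : y ∈ L1) (hy2 : y ∈ L2) : x = y := by
  by_contra hxy
  exact hne ((line_eq_of_two h1 hx1 hy1 hxy).trans (line_eq_of_two h2 hx2 hy2 hxy).symm)

/-- Crossing contradiction: two edges from `w` on the same line, with the two
neighbors on the same side of `w`. -/
lemma no_same_side {V : Type*} {G : SimpleGraph V} {k : ℕ} (C : LineCover G 2 k)
    {w a b : V} (hwa : G.Adj w a) (hwb : G.Adj w b) (hab : a ≠ b)
    {p v : Fin 2 → ℝ} (hv : v ≠ 0) {s ta tb : ℝ}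
    (hw : C.pos w = p + s • v) (ha : C.pos a = p + ta • v) (hb : C.pos b = p + tb • v)
    (hside : (s < ta ∧ s < tb) ∨ (ta < s ∧ tb < s)) : False := by
  have hpairs : ({w, a} : Set V) ≠ {w, b} := by
    intro heq
    have : a ∈ ({w, b} : Set V) := heq ▸ (by simp)
    simp only [Set.mem_insert_iff, Set.mem_singleton_iff] at this
    rcases this with h | h
    · exact hwa.ne' h
    · exact hab h
  -- pick the crossing parameter t
  obtain ⟨t, hts, hta, htb⟩ : ∃ t : ℝ, t ≠ s ∧
      (p + t • v ∈ segment ℝ (C.pos w) (C.pos a)) ∧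
      (p + t • v ∈ segment ℝ (C.pos w) (C.pos b)) := by
    rcases hside with ⟨h1, h2⟩ | ⟨h1, h2⟩
    · refine ⟨(s + min ta tb) / 2, ?_, ?_, ?_⟩
      · have hm : s < min ta tb := lt_min h1 h2
        intro hc; linarith
      · rw [hw, ha]
        exact mem_seg_param p v (by have := lt_min h1 h2; linarith)
          (by have := min_le_left ta tb; linarith [lt_min h1 h2])
      · rw [hw, hb]
        exact mem_seg_param p v (by have := lt_min h1 h2; linarith)
          (by have := min_le_right ta tb; linarith [lt_min h1 h2])
    · refine ⟨(s + max ta tb) / 2, ?_, ?_, ?_⟩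
      · have : max ta tb < s := max_lt h1 h2
        intro hc; linarith
      · rw [hw, ha, segment_symm]
        exact mem_seg_param p v (by have := le_max_left ta tb; linarith [max_lt h1 h2])
          (by have := max_lt h1 h2; linarith)
      · rw [hw, hb, segment_symm]
        exact mem_seg_param p v (by have := le_max_right ta tb; linarith [max_lt h1 h2])
          (by have := max_lt h1 h2; linarith)
  obtain ⟨w', hw1, hw2, hwx⟩ := C.noCross hwa hwb hpairs _ ⟨hta, htb⟩
  have hta' : ta ≠ s := by
    intro hc
    exact hwa.ne' (C.inj (by rw [ha, hw, hc]))
  have htb' : tb ≠ s := by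
    intro hc
    exact hwb.ne' (C.inj (by rw [hb, hw, hc]))
  rcases hw1 with rfl | rfl
  · rw [hw] at hwx
    exact hts (param_inj hv hwx)
  · rcases hw2 with h | h
    · rw [h, hw] at hwx
      exact hts (param_inj hv hwx)
    · exact hab h

/-- A vertex of degree at least 3 lies on two distinct lines of the cover. -/
lemma exists_two_lines {V : Type*} {G : SimpleGraph V} {k : ℕ} (C : LineCover G 2 k)
    {w : V} (hw : 3 ≤ (G.neighborSet w).ncard) :
    ∃ i j : Fin k, C.lines i ≠ C.lines j ∧ C.pos w ∈ C.lines i ∧ C.pos w ∈ C.lines j := by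
  -- extract three distinct neighbors
  have hfin : (G.neighborSet w).Finite := by
    by_contra hinf
    rw [Set.Infinite.ncard hinf] at hw
    omega
  classical
  have hcard : 3 ≤ hfin.toFinset.card := by
    rwa [← Set.ncard_eq_toFinset_card _ hfin]
  have h1' : 0 < hfin.toFinset.card := by omega
  obtain ⟨a, haF⟩ := Finset.card_pos.mp h1'
  have h2 : 0 < (hfin.toFinset.erase a).card := by
    rw [Finset.card_erase_of_mem haF]; omega
  obtain ⟨b, hbF⟩ := Finset.card_pos.mp h2
  have h3 : 0 < ((hfin.toFinset.erase a).erase b).card := by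
    rw [Finset.card_erase_of_mem hbF, Finset.card_erase_of_mem haF]; omega
  obtain ⟨c, hcF⟩ := Finset.card_pos.mp h3
  have hba : b ≠ a := (Finset.mem_erase.mp hbF).1
  have hcb : c ≠ b := (Finset.mem_erase.mp hcF).1
  have hca : c ≠ a := (Finset.mem_erase.mp (Finset.mem_erase.mp hcF).2).1
  have hwa : G.Adj w a := Set.Finite.mem_toFinset hfin |>.mp haF
  have hwb : G.Adj w b := Set.Finite.mem_toFinset hfin |>.mp (Finset.mem_erase.mp hbF).2
  have hwc : G.Adj w c :=
    Set.Finite.mem_toFinset hfin |>.mp (Finset.mem_erase.mp (Finset.mem_erase.mp hcF).2).2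
  obtain ⟨ia, hia⟩ := C.coversE hwa
  obtain ⟨ib, hib⟩ := C.coversE hwb
  obtain ⟨ic, hic⟩ := C.coversE hwc
  have hwia : C.pos w ∈ C.lines ia := hia (left_mem_segment ℝ _ _)
  have hwib : C.pos w ∈ C.lines ib := hib (left_mem_segment ℝ _ _)
  have hwic : C.pos w ∈ C.lines ic := hic (left_mem_segment ℝ _ _)
  by_cases hab : C.lines ia = C.lines ib
  · by_cases hac : C.lines ia = C.lines ic
    · -- all three edges on the same line: contradiction
      exfalso
      obtain ⟨p, v, hv, hL⟩ := C.isLine ia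
      rw [hL] at hwia hia
      rw [hab.symm.trans hL] at hib
      rw [hac.symm.trans hL] at hic
      obtain ⟨s, hs⟩ := hwia
      obtain ⟨ta, hta⟩ := hia (right_mem_segment ℝ _ _)
      obtain ⟨tb, htb⟩ := hib (right_mem_segment ℝ _ _)
      obtain ⟨tc, htc⟩ := hic (right_mem_segment ℝ _ _)
      have hta' : ta ≠ s := fun hc => hwa.ne' (C.inj (by rw [hta, hs, hc]))
      have htb' : tb ≠ s := fun hc => hwb.ne' (C.inj (by rw [htb, hs, hc]))
      have htc' : tc ≠ s := fun hc => hwc.ne' (C.inj (by rw [htc, hs, hc]))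
      rcases lt_or_gt_of_ne hta' with h1 | h1 <;>
        rcases lt_or_gt_of_ne htb' with h2 | h2 <;>
          rcases lt_or_gt_of_ne htc' with h3 | h3
      · exact no_same_side C hwa hwb hba.symm hv hs hta htb (Or.inr ⟨h1, h2⟩)
      · exact no_same_side C hwa hwb hba.symm hv hs hta htb (Or.inr ⟨h1, h2⟩)
      · exact no_same_side C hwa hwc hca.symm hv hs hta htc (Or.inr ⟨h1, h3⟩)
      · exact no_same_side C hwb hwc hcb.symm hv hs htb htc (Or.inl ⟨h2, h3⟩)
      · exact no_same_side C hwb hwc hcb.symm hv hs htb htc (Or.inr ⟨h2, h3⟩)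
      · exact no_same_side C hwa hwc hca.symm hv hs hta htc (Or.inl ⟨h1, h3⟩)
      · exact no_same_side C hwa hwb hba.symm hv hs hta htb (Or.inl ⟨h1, h2⟩)
      · exact no_same_side C hwa hwb hba.symm hv hs hta htb (Or.inl ⟨h1, h2⟩)
    · exact ⟨ia, ic, hac, hwia, hwic⟩
  · exact ⟨ia, ib, hab, hwia, hwib⟩

/-- If `G` admits a straight-line drawing in `ℝ²` covered by `k` lines, then `G` has at
most `k(k-1)/2` vertices of degree at least 3. -/
theorem stmt_3 {V : Type*} (G : SimpleGraph V) (k : ℕ)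
    (h : Nonempty (LineCover G 2 k)) :
    {v : V | 3 ≤ (G.neighborSet v).ncard}.ncard ≤ k * (k - 1) / 2 := by
  obtain ⟨C⟩ := h
  set S : Set V := {v : V | 3 ≤ (G.neighborSet v).ncard} with hS
  have hkey : ∀ v : S, ∃ i j : Fin k, C.lines i ≠ C.lines j ∧
      C.pos v.1 ∈ C.lines i ∧ C.pos v.1 ∈ C.lines j :=
    fun v => exists_two_lines C v.2
  choose fI fJ hne hmi hmj using hkey
  have hij : ∀ v : S, fI v ≠ fJ v := fun v hc => hne v (by rw [hc])
  let f : S → {s : Sym2 (Fin k) // ¬s.IsDiag} :=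
    fun v => ⟨s(fI v, fJ v), by simp [Sym2.isDiag_iff_proj_eq]; exact hij v⟩
  have hfinj : Function.Injective f := by
    intro v1 v2 heq
    have heq' : s(fI v1, fJ v1) = s(fI v2, fJ v2) := congrArg Subtype.val heq
    rw [Sym2.eq_iff] at heq'
    have hmem : C.pos v2.1 ∈ C.lines (fI v1) ∧ C.pos v2.1 ∈ C.lines (fJ v1) := by
      rcases heq' with ⟨h1, h2⟩ | ⟨h1, h2⟩
      · exact ⟨h1 ▸ hmi v2, h2 ▸ hmj v2⟩
      · exact ⟨h1 ▸ hmj v2, h2 ▸ hmi v2⟩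
    have : C.pos v1.1 = C.pos v2.1 :=
      line_inter_subsingleton (C.isLine _) (C.isLine _) (hne v1)
        (hmi v1) (hmj v1) hmem.1 hmem.2
    exact Subtype.ext (C.inj this)
  calc S.ncard = Nat.card S := (Nat.card_coe_set_eq S).symm
    _ ≤ Nat.card {s : Sym2 (Fin k) // ¬s.IsDiag} := Nat.card_le_card_of_injective f hfinj
    _ = Fintype.card {s : Sym2 (Fin k) // ¬s.IsDiag} := Nat.card_eq_fintype_card
    _ = (Fintype.card (Fin k)).choose 2 := Sym2.card_subtype_not_diag
    _ = k.choose 2 := by rw [Fintype.card_fin]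
    _ = k * (k - 1) / 2 := Nat.choose_two_right k
end

section
/- For every graph G and d ≥ 3, the minimum number of lines needed to cover a straight-line drawing of G in ℝ^d equals the minimum number needed in ℝ³; i.e., ρ¹_d(G) = ρ¹_3(G) for all d ≥ 3. -/
/-- Image of a line under a linear map not killing the direction is a line. -/
lemma isLine_image {d e : ℕ} (f : (Fin d → ℝ) →ₗ[ℝ] (Fin e → ℝ))
    {p v : Fin d → ℝ} (hv : f v ≠ 0) :
    f '' {x | ∃ t : ℝ, x = p + t • v} = {x | ∃ t : ℝ, x = f p + t • f v} := by
  ext x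
  constructor
  · rintro ⟨y, ⟨t, rfl⟩, rfl⟩
    exact ⟨t, by simp [map_add, map_smul]⟩
  · rintro ⟨t, rfl⟩
    exact ⟨p + t • v, ⟨t, rfl⟩, by simp [map_add, map_smul]⟩

/-- Pushing a line cover forward along a linear map injective on the union of the lines. -/
noncomputable def LineCover.map {V : Type*} {G : SimpleGraph V} {d e k : ℕ}
    (C : LineCover G d k) (f : (Fin d → ℝ) →ₗ[ℝ] (Fin e → ℝ))
    (hf : Set.InjOn f (⋃ i, C.lines i)) : LineCover G e k where
  pos := fun v => f (C.pos v)
  inj := by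
    intro u v huv
    have hu := C.coversV u
    have hv := C.coversV v
    obtain ⟨i, hi⟩ := hu
    obtain ⟨j, hj⟩ := hv
    exact C.inj (hf (Set.mem_iUnion.2 ⟨i, hi⟩) (Set.mem_iUnion.2 ⟨j, hj⟩) huv)
  lines := fun i => f '' C.lines i
  isLine := by
    intro i
    obtain ⟨p, v, hv, hL⟩ := C.isLine i
    have hpmem : p ∈ C.lines i := by rw [hL]; exact ⟨0, by simp⟩
    have hpvmem : p + v ∈ C.lines i := by rw [hL]; exact ⟨1, by simp⟩
    have hfv : f v ≠ 0 := by
      intro h0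
      have : f (p + v) = f p := by simp [map_add, h0]
      have := hf (Set.mem_iUnion.2 ⟨i, hpvmem⟩) (Set.mem_iUnion.2 ⟨i, hpmem⟩) this
      exact hv (by simpa using congrArg (· - p) this)
    refine ⟨f p, f v, hfv, ?_⟩
    show f '' C.lines i = _
    rw [hL, isLine_image f hfv]
  coversV := by
    intro v
    obtain ⟨i, hi⟩ := C.coversV v
    exact ⟨i, Set.mem_image_of_mem f hi⟩
  coversE := by
    intro u v huv
    obtain ⟨i, hi⟩ := C.coversE huv
    refine ⟨i, ?_⟩
    rw [show segment ℝ (f (C.pos u)) (f (C.pos v)) = f '' segment ℝ (C.pos u) (C.pos v) from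
      (image_segment ℝ f.toAffineMap _ _).symm]
    exact Set.image_mono hi
  noCross := by
    intro u v a b huv hab hne x hx
    obtain ⟨hx1, hx2⟩ := hx
    rw [show segment ℝ (f (C.pos u)) (f (C.pos v)) = f '' segment ℝ (C.pos u) (C.pos v) from
      (image_segment ℝ f.toAffineMap _ _).symm] at hx1
    rw [show segment ℝ (f (C.pos a)) (f (C.pos b)) = f '' segment ℝ (C.pos a) (C.pos b) from
      (image_segment ℝ f.toAffineMap _ _).symm] at hx2
    obtain ⟨x1, hx1m, rfl⟩ := hx1
    obtain ⟨x2, hx2m, hx2e⟩ := hx2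
    obtain ⟨i, hi⟩ := C.coversE huv
    obtain ⟨j, hj⟩ := C.coversE hab
    have hx12 : x1 = x2 :=
      hf (Set.mem_iUnion.2 ⟨i, hi hx1m⟩) (Set.mem_iUnion.2 ⟨j, hj hx2m⟩) hx2e.symm
    obtain ⟨w, hw1, hw2, hw3⟩ := C.noCross huv hab hne x1 ⟨hx1m, hx12 ▸ hx2m⟩
    exact ⟨w, hw1, hw2, by rw [hw3]⟩

/-- Any line cover in `ℝ^3` gives one in `ℝ^d` for `d ≥ 3`. -/
lemma cover_up {V : Type*} {G : SimpleGraph V} {d k : ℕ} (hd : 3 ≤ d)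
    (C : LineCover G 3 k) : Nonempty (LineCover G d k) := by
  set g : Fin d → Fin 3 := fun i => if h : (i : ℕ) < 3 then ⟨i, h⟩ else ⟨0, by norm_num⟩ with hg
  have hgs : Function.Surjective g := by
    intro j
    refine ⟨⟨(j : ℕ), lt_of_lt_of_le j.2 hd⟩, ?_⟩
    simp [hg, j.2]
  exact ⟨C.map (LinearMap.funLeft ℝ ℝ g)
    ((LinearMap.funLeft_injective_of_surjective ℝ ℝ g hgs).injOn)⟩

/-- One-step projection: a line cover in `ℝ^{d+1}` gives one in `ℝ^d`, for `d ≥ 3`. -/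
lemma cover_down {V : Type*} {G : SimpleGraph V} {d k : ℕ} (hd : 3 ≤ d)
    (C : LineCover G (d + 1) k) : Nonempty (LineCover G d k) := by
  classical
  -- choose base point and direction of each line
  have hch : ∀ i, ∃ p v : Fin (d+1) → ℝ, v ≠ 0 ∧
      C.lines i = {x | ∃ t : ℝ, x = p + t • v} := C.isLine
  choose P D hD hL using hch
  -- the bad subspaces
  set W : Fin k × Fin k → Submodule ℝ (Fin (d+1) → ℝ) :=
    fun ij => Submodule.span ℝ {P ij.1 - P ij.2, D ij.1, D ij.2} with hW
  have hWne : ∀ ij, W ij ≠ ⊤ := by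
    intro ij h
    have h3 : Module.finrank ℝ (W ij) ≤ 3 := by
      have : Module.finrank ℝ (W ij) ≤
          ({P ij.1 - P ij.2, D ij.1, D ij.2} : Set (Fin (d+1) → ℝ)).toFinset.card :=
        finrank_span_le_card _
      refine this.trans ?_
      simp only [Set.toFinset_insert, Set.toFinset_singleton]
      refine (Finset.card_insert_le _ _).trans ?_
      exact Nat.succ_le_succ ((Finset.card_insert_le _ _).trans (by simp))
    rw [h] at h3
    have := Module.finrank_fin_fun (R := ℝ) (n := d + 1)
    rw [finrank_top, this] at h3
    omega
  -- pick a good direction u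
  have hex : ∃ u : Fin (d+1) → ℝ, ∀ ij, u ∉ W ij := by
    by_contra hcon
    push_neg at hcon
    have hu : ⋃ ij, ((W ij : Submodule ℝ (Fin (d+1) → ℝ)) : Set (Fin (d+1) → ℝ)) =
        Set.univ := by
      ext x
      simp only [Set.mem_iUnion, Set.mem_univ, iff_true, SetLike.mem_coe]
      exact hcon x
    obtain ⟨ij, hij⟩ := Subspace.exists_eq_top_of_iUnion_eq_univ hu
    exact hWne ij hij
  obtain ⟨u, hu⟩ := hex
  by_cases hk : k = 0
  · -- no lines at all: any map works
    subst hk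
    refine ⟨C.map 0 ?_⟩
    intro x hx
    rw [Set.iUnion_of_empty] at hx
    exact absurd hx (Set.notMem_empty x)
  · have hk0 : 0 < k := Nat.pos_of_ne_zero hk
    have hu0 : u ≠ 0 := by
      intro h
      exact hu (⟨0, hk0⟩, ⟨0, hk0⟩) (h ▸ Submodule.zero_mem _)
    -- quotient by span u, identified with ℝ^d
    set S : Submodule ℝ (Fin (d+1) → ℝ) := Submodule.span ℝ {u} with hS
    have hfr : Module.finrank ℝ ((Fin (d+1) → ℝ) ⧸ S) = d := by
      have h1 := Submodule.finrank_quotient_add_finrank S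
      rw [finrank_span_singleton hu0, Module.finrank_fin_fun] at h1
      omega
    have hfr2 : Module.finrank ℝ ((Fin (d+1) → ℝ) ⧸ S) = Module.finrank ℝ (Fin d → ℝ) := by
      rw [hfr, Module.finrank_fin_fun]
    let e : ((Fin (d+1) → ℝ) ⧸ S) ≃ₗ[ℝ] (Fin d → ℝ) := LinearEquiv.ofFinrankEq _ _ hfr2
    let f : (Fin (d+1) → ℝ) →ₗ[ℝ] (Fin d → ℝ) := e.toLinearMap ∘ₗ S.mkQ
    refine ⟨C.map f ?_⟩
    intro x hx y hy hxy
    obtain ⟨i, hi⟩ := Set.mem_iUnion.1 hx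
    obtain ⟨j, hj⟩ := Set.mem_iUnion.1 hy
    rw [hL i] at hi
    rw [hL j] at hj
    obtain ⟨t, rfl⟩ := hi
    obtain ⟨s, rfl⟩ := hj
    by_contra hne
    -- x - y ∈ span {u}
    have hmem : (P i + t • D i) - (P j + s • D j) ∈ S := by
      have : S.mkQ ((P i + t • D i) - (P j + s • D j)) = 0 := by
        have : e (S.mkQ (P i + t • D i)) = e (S.mkQ (P j + s • D j)) := hxy
        have h2 := e.injective this
        rw [map_sub, h2, sub_self]
      rwa [← LinearMap.mem_ker, Submodule.ker_mkQ] at this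
    obtain ⟨c, hc⟩ := Submodule.mem_span_singleton.1 hmem
    have hc0 : c ≠ 0 := by
      intro h
      rw [h, zero_smul] at hc
      exact hne (sub_eq_zero.mp hc.symm)
    have humem : u ∈ W (i, j) := by
      have hxyW : (P i + t • D i) - (P j + s • D j) ∈ W (i, j) := by
        have h1 : P i - P j ∈ W (i, j) := Submodule.subset_span (by simp)
        have h2 : D i ∈ W (i, j) := Submodule.subset_span (by simp)
        have h3 : D j ∈ W (i, j) := Submodule.subset_span (by simp)
        have : (P i + t • D i) - (P j + s • D j)
            = (P i - P j) + t • D i - s • D j := by module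
        rw [this]
        exact Submodule.sub_mem _ (Submodule.add_mem _ h1 (Submodule.smul_mem _ _ h2))
          (Submodule.smul_mem _ _ h3)
      have : u = c⁻¹ • ((P i + t • D i) - (P j + s • D j)) := by
        rw [← hc, smul_smul, inv_mul_cancel₀ hc0, one_smul]
      rw [this]
      exact Submodule.smul_mem _ _ hxyW
    exact hu (i, j) humem

/-- Any line cover in `ℝ^d`, `d ≥ 3`, gives one in `ℝ^3`. -/
lemma cover_to_three {V : Type*} {G : SimpleGraph V} {k : ℕ} :
    ∀ d, 3 ≤ d → Nonempty (LineCover G d k) → Nonempty (LineCover G 3 k) := by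
  intro d
  induction d with
  | zero => omega
  | succ n ih =>
    intro hd hC
    rcases Nat.lt_or_ge n 3 with hn | hn
    · have : n = 2 := by omega
      subst this
      exact hC
    · obtain ⟨C⟩ := hC
      exact ih hn (cover_down hn C)

/-- For every graph `G` and `d ≥ 3`, `ρ¹_d(G) = ρ¹_3(G)`. -/
theorem stmt_5 {V : Type*} (G : SimpleGraph V) (d : ℕ) (hd : 3 ≤ d) :
    rho1 G d = rho1 G 3 := by
  unfold rho1
  congr 1
  ext k
  simp only [Set.mem_setOf_eq]
  constructor
  · exact cover_to_three d hd
  · rintro ⟨C⟩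
    exact cover_up hd C
end

section
/- If a graph G has exactly C(k,2) vertices of degree 4 and admits a straight-line drawing in ℝ³ covered by k lines, then all k lines lie in a common plane; consequently ρ¹_3(G) = ρ¹_2(G) for such G. -/
/-- `P` is a plane in `ℝ³`. -/
def IsPlane (P : Set (Fin 3 → ℝ)) : Prop :=
  ∃ p u v : Fin 3 → ℝ, LinearIndependent ℝ ![u, v] ∧
    P = {x | ∃ s t : ℝ, x = p + s • u + t • v}



lemma line_rep {d : ℕ} {L : Set (Fin d → ℝ)} (hL : IsLine L) {x : Fin d → ℝ} (hx : x ∈ L) :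
    ∃ v : Fin d → ℝ, v ≠ 0 ∧ L = {y | ∃ t : ℝ, y = x + t • v} := by
  obtain ⟨p, v, hv, rfl⟩ := hL
  obtain ⟨t₀, rfl⟩ := hx
  refine ⟨v, hv, ?_⟩
  ext y
  constructor
  · rintro ⟨t, rfl⟩
    exact ⟨t - t₀, by module⟩
  · rintro ⟨t, rfl⟩
    exact ⟨t₀ + t, by module⟩

lemma line_through_eq {d : ℕ} {x u w : Fin d → ℝ} {a : ℝ} (ha : a ≠ 0) (h : w = a • u) :
    {y | ∃ t : ℝ, y = x + t • w} = {y | ∃ t : ℝ, y = x + t • u} := by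
  subst h
  ext y
  constructor
  · rintro ⟨t, rfl⟩
    exact ⟨t * a, by module⟩
  · rintro ⟨t, rfl⟩
    exact ⟨t / a, by rw [smul_smul, div_mul_cancel₀ _ ha]⟩

lemma line_inter_subsingleton_s6 {d : ℕ} {L M : Set (Fin d → ℝ)} (hL : IsLine L) (hM : IsLine M)
    (hne : L ≠ M) {x y : Fin d → ℝ} (hxL : x ∈ L) (hxM : x ∈ M) (hyL : y ∈ L) (hyM : y ∈ M) :
    x = y := by
  by_contra hxy
  obtain ⟨u, hu, rfl⟩ := line_rep hL hxL
  obtain ⟨w, hw, rfl⟩ := line_rep hM hxM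
  obtain ⟨t1, ht1⟩ := hyL
  obtain ⟨t2, ht2⟩ := hyM
  have h1 : t1 ≠ 0 := by rintro rfl; apply hxy; rw [ht1]; module
  have h2 : t2 ≠ 0 := by rintro rfl; apply hxy; rw [ht2]; module
  have hwu : w = (t1 / t2) • u := by
    have : t2 • w = t1 • u := by
      have := ht1 ▸ ht2
      have h' : x + t2 • w = x + t1 • u := by rw [← ht2, ht1]
      have := add_left_cancel h'
      exact this
    calc w = t2⁻¹ • (t2 • w) := by rw [smul_smul, inv_mul_cancel₀ h2, one_smul]
    _ = t2⁻¹ • (t1 • u) := by rw [this]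
    _ = (t1 / t2) • u := by rw [smul_smul]; ring_nf
  exact hne (line_through_eq (div_ne_zero h1 h2) hwu).symm

/-- key no-cross consequence: two edges at `v` cannot have one endpoint inside
the other's segment -/
lemma seg_notMem {V : Type*} {G : SimpleGraph V} {d k : ℕ} (c : LineCover G d k)
    {v x y : V} (hx : G.Adj v x) (hy : G.Adj v y) (hxy : x ≠ y)
    (hmem : c.pos x ∈ segment ℝ (c.pos v) (c.pos y)) : False := by
  have hsets : ({v, x} : Set V) ≠ {v, y} := by
    intro h
    have : x ∈ ({v, y} : Set V) := h ▸ (by simp : x ∈ ({v, x} : Set V))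
    rcases this with h' | h'
    · exact hx.ne' h'
    · exact hxy h'
  obtain ⟨w, hw1, hw2, hw3⟩ := c.noCross hx hy hsets (c.pos x)
    ⟨right_mem_segment ℝ _ _, hmem⟩
  have hwx : w = x := by
    rcases hw1 with rfl | rfl
    · exact absurd (c.inj hw3) hx.ne'
    · rfl
  subst hwx
  rcases hw2 with rfl | rfl
  · exact hx.ne rfl
  · exact hxy rfl

/-- among three nonzero reals, two (distinct indices) have positive product -/
lemma three_signs {a b c : ℝ} (ha : a ≠ 0) (hb : b ≠ 0) (hc : c ≠ 0) :
    0 < a * b ∨ 0 < a * c ∨ 0 < b * c := by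
  rcases ha.lt_or_gt with h | h <;> rcases hb.lt_or_gt with h' | h' <;>
    rcases hc.lt_or_gt with h'' | h''
  · exact Or.inl (mul_pos_of_neg_of_neg h h')
  · exact Or.inl (mul_pos_of_neg_of_neg h h')
  · exact Or.inr (Or.inl (mul_pos_of_neg_of_neg h h''))
  · exact Or.inr (Or.inr (mul_pos h' h''))
  · exact Or.inr (Or.inr (mul_pos_of_neg_of_neg h' h''))
  · exact Or.inr (Or.inl (mul_pos h h''))
  · exact Or.inl (mul_pos h h')
  · exact Or.inl (mul_pos h h')

lemma mem_segment_param {d : ℕ} (p u : Fin d → ℝ) {s t : ℝ} (hst : 0 < s * t)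
    (habs : |s| ≤ |t|) : p + s • u ∈ segment ℝ p (p + t • u) := by
  rw [segment_eq_image']
  refine ⟨s / t, ⟨?_, ?_⟩, ?_⟩
  · rcases mul_pos_iff.mp hst with ⟨h1, h2⟩ | ⟨h1, h2⟩
    · exact le_of_lt (div_pos h1 h2)
    · exact le_of_lt (div_pos_of_neg_of_neg h1 h2)
  · rcases mul_pos_iff.mp hst with ⟨h1, h2⟩ | ⟨h1, h2⟩
    · rw [div_le_one h2]
      rwa [abs_of_pos h1, abs_of_pos h2] at habs
    · rw [div_le_one_iff]
      right; right
      constructor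
      · exact h2
      · rw [abs_of_neg h1, abs_of_neg h2] at habs; linarith
  · have ht : t ≠ 0 := by
      rcases mul_pos_iff.mp hst with ⟨_, h2⟩ | ⟨_, h2⟩
      exacts [ne_of_gt h2, ne_of_lt h2]
    show p + (s / t) • (p + t • u - p) = p + s • u
    have h3 : p + t • u - p = t • u := by module
    rw [h3, smul_smul, div_mul_cancel₀ _ ht]

/-- a vertex of degree 4 lies on two distinct lines of the cover -/
lemma deg4_two_lines {V : Type*} {G : SimpleGraph V} {d k : ℕ} (c : LineCover G d k)
    {v : V} (hv : (G.neighborSet v).ncard = 4) :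
    ∃ i j : Fin k, c.lines i ≠ c.lines j ∧ c.pos v ∈ c.lines i ∧ c.pos v ∈ c.lines j := by
  obtain ⟨t, hts, htc⟩ := Set.exists_subset_card_eq (s := G.neighborSet v) (n := 3) (by omega)
  obtain ⟨x, y, z, hxy, hxz, hyz, rfl⟩ := Set.ncard_eq_three.mp htc
  have hax : G.Adj v x := hts (by simp)
  have hay : G.Adj v y := hts (by simp)
  have haz : G.Adj v z := hts (by simp)
  obtain ⟨ix, hix⟩ := c.coversE hax
  obtain ⟨iy, hiy⟩ := c.coversE hay
  obtain ⟨iz, hiz⟩ := c.coversE haz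
  have hvx : c.pos v ∈ c.lines ix := hix (left_mem_segment ℝ _ _)
  have hvy : c.pos v ∈ c.lines iy := hiy (left_mem_segment ℝ _ _)
  have hvz : c.pos v ∈ c.lines iz := hiz (left_mem_segment ℝ _ _)
  by_cases e1 : c.lines ix = c.lines iy
  · by_cases e2 : c.lines ix = c.lines iz
    · -- all segments on one line: contradiction
      exfalso
      obtain ⟨u, hu, hrep⟩ := line_rep (c.isLine ix) hvx
      have hx' : c.pos x ∈ c.lines ix := hix (right_mem_segment ℝ _ _)
      have hy' : c.pos y ∈ c.lines ix := e1 ▸ hiy (right_mem_segment ℝ _ _)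
      have hz' : c.pos z ∈ c.lines ix := e2 ▸ hiz (right_mem_segment ℝ _ _)
      rw [hrep] at hx' hy' hz'
      obtain ⟨tx, htx⟩ := hx'
      obtain ⟨ty, hty⟩ := hy'
      obtain ⟨tz, htz⟩ := hz'
      have hpv : ∀ (w : V), G.Adj v w → c.pos w ≠ c.pos v := fun w hw h =>
        hw.ne' (c.inj h)
      have hntx : tx ≠ 0 := by
        rintro rfl; exact hpv x hax (by rw [htx]; module)
      have hnty : ty ≠ 0 := by
        rintro rfl; exact hpv y hay (by rw [hty]; module)
      have hntz : tz ≠ 0 := by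
        rintro rfl; exact hpv z haz (by rw [htz]; module)
      -- helper: two same-sign neighbors give a crossing contradiction
      have key : ∀ (a b : V) (sa sb : ℝ), G.Adj v a → G.Adj v b → a ≠ b →
          c.pos a = c.pos v + sa • u → c.pos b = c.pos v + sb • u → 0 < sa * sb → False := by
        intro a b sa sb haa hab hne hpa hpb hprod
        rcases le_total |sa| |sb| with hle | hle
        · apply seg_notMem c haa hab hne
          have := mem_segment_param (c.pos v) u hprod hle
          rwa [← hpa, ← hpb] at this
        · apply seg_notMem c hab haa hne.symm
          have := mem_segment_param (c.pos v) u (by rwa [mul_comm] at hprod) hle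
          rwa [← hpb, ← hpa] at this
      rcases three_signs hntx hnty hntz with h | h | h
      · exact key x y tx ty hax hay hxy htx hty h
      · exact key x z tx tz hax haz hxz htx htz h
      · exact key y z ty tz hay haz hyz hty htz h
    · exact ⟨ix, iz, e2, hvx, hvz⟩
  · exact ⟨ix, iy, e1, hvx, hvy⟩

lemma exists_pair_map {V : Type*} {G : SimpleGraph V} {d m : ℕ} (c : LineCover G d m) :
    ∃ f : {v : V | (G.neighborSet v).ncard = 4} → {s : Sym2 (Fin m) // ¬ s.IsDiag},
      Function.Injective f ∧
      ∀ (v : {v : V | (G.neighborSet v).ncard = 4}) (i j : Fin m),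
        (f v : Sym2 (Fin m)) = s(i, j) →
        c.lines i ≠ c.lines j ∧ c.pos ↑v ∈ c.lines i ∧ c.pos ↑v ∈ c.lines j := by
  have hch : ∀ v : {v : V | (G.neighborSet v).ncard = 4},
      ∃ p : Fin m × Fin m, c.lines p.1 ≠ c.lines p.2 ∧
        c.pos ↑v ∈ c.lines p.1 ∧ c.pos ↑v ∈ c.lines p.2 := by
    intro v
    obtain ⟨i, j, h1, h2, h3⟩ := deg4_two_lines c v.2
    exact ⟨(i, j), h1, h2, h3⟩
  choose p hp1 hp2 hp3 using hch
  have hnd : ∀ v, ¬ (s((p v).1, (p v).2)).IsDiag := by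
    intro v h
    rw [Sym2.mk_isDiag_iff] at h
    exact hp1 v (by rw [h])
  refine ⟨fun v => ⟨s((p v).1, (p v).2), hnd v⟩, ?_, ?_⟩
  · intro v w h
    have hs : s((p v).1, (p v).2) = s((p w).1, (p w).2) := congrArg Subtype.val h
    rw [Sym2.eq_iff] at hs
    have hwv : c.pos ↑w ∈ c.lines (p v).1 ∧ c.pos ↑w ∈ c.lines (p v).2 := by
      rcases hs with ⟨h1, h2⟩ | ⟨h1, h2⟩
      · constructor
        · rw [h1]; exact hp2 w
        · rw [h2]; exact hp3 w
      · constructor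
        · rw [h1]; exact hp3 w
        · rw [h2]; exact hp2 w
    have := line_inter_subsingleton_s6 (c.isLine (p v).1) (c.isLine (p v).2) (hp1 v)
      (hp2 v) (hp3 v) hwv.1 hwv.2
    exact Subtype.ext (c.inj this)
  · intro v i j h
    rw [Sym2.eq_iff] at h
    rcases h with ⟨h1, h2⟩ | ⟨h1, h2⟩
    · exact ⟨h1 ▸ h2 ▸ hp1 v, h1 ▸ hp2 v, h2 ▸ hp3 v⟩
    · refine ⟨?_, ?_, ?_⟩
      · rw [← h1, ← h2]; exact fun hh => hp1 v hh.symm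
      · rw [← h2]; exact hp3 v
      · rw [← h1]; exact hp2 v

lemma ncard_deg4_le {V : Type*} {G : SimpleGraph V} {d m : ℕ} (c : LineCover G d m) :
    {v : V | (G.neighborSet v).ncard = 4}.ncard ≤ m.choose 2 := by
  obtain ⟨f, hf, -⟩ := exists_pair_map c
  have h2 : Nat.card {s : Sym2 (Fin m) // ¬ s.IsDiag} = m.choose 2 := by
    rw [Nat.card_eq_fintype_card, Sym2.card_subtype_not_diag, Fintype.card_fin]
  rw [← Nat.card_coe_set_eq]
  exact h2 ▸ Nat.card_le_card_of_injective f hf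

lemma equality_structure {V : Type*} {G : SimpleGraph V} {d m : ℕ} (c : LineCover G d m)
    (h : {v : V | (G.neighborSet v).ncard = 4}.ncard = m.choose 2) (hm : 2 ≤ m) :
    ∃ q : Fin m → Fin m → (Fin d → ℝ),
      (∀ i j, i ≠ j → c.lines i ≠ c.lines j ∧ q i j ∈ c.lines i ∧ q i j ∈ c.lines j) ∧
      (∀ i j i' j', i ≠ j → i' ≠ j' → q i j = q i' j' → s(i, j) = s(i', j')) := by
  obtain ⟨f, hf, hprop⟩ := exists_pair_map c
  have hT : Nat.card {s : Sym2 (Fin m) // ¬ s.IsDiag} = m.choose 2 := by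
    rw [Nat.card_eq_fintype_card, Sym2.card_subtype_not_diag, Fintype.card_fin]
  have hS : Nat.card {v : V | (G.neighborSet v).ncard = 4} = m.choose 2 := by
    rw [Nat.card_coe_set_eq, h]
  have hfin : Finite {v : V | (G.neighborSet v).ncard = 4} := by
    apply Nat.finite_of_card_ne_zero
    rw [hS]
    exact (Nat.choose_pos hm).ne'
  have hbij := hf.bijective_of_nat_card_le (by rw [hT, hS])
  have hsurj := hbij.surjective
  refine ⟨fun i j => if hij : i = j then 0 else
      c.pos ↑(Function.surjInv hsurj ⟨s(i, j), by rw [Sym2.mk_isDiag_iff]; exact hij⟩),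
    ?_, ?_⟩
  · intro i j hij
    simp only [dif_neg hij]
    exact hprop _ i j (congrArg Subtype.val (Function.surjInv_eq hsurj _))
  · intro i j i' j' hij hij' hq
    simp only [dif_neg hij, dif_neg hij'] at hq
    have h1 := Subtype.coe_injective (c.inj hq)
    have h2 := congrArg f h1
    rw [Function.surjInv_eq hsurj, Function.surjInv_eq hsurj] at h2
    exact congrArg Subtype.val h2

lemma exists_indep {u : Fin 3 → ℝ} (hu : u ≠ 0) : ∃ w, LinearIndependent ℝ ![u, w] := by
  obtain ⟨idx, hidx⟩ := Function.ne_iff.mp hu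
  simp only [Pi.zero_apply] at hidx
  obtain ⟨j, hji⟩ : ∃ j : Fin 3, idx ≠ j := by
    rcases eq_or_ne idx 0 with h | h
    · exact ⟨1, by rw [h]; decide⟩
    · exact ⟨0, h⟩
  refine ⟨Pi.single j 1, linearIndependent_fin2.mpr ⟨?_, ?_⟩⟩
  · simp only [Matrix.cons_val_one, Matrix.head_cons]
    intro h
    have := congrFun h j
    simp [Pi.single_eq_same] at this
  · intro a h
    simp only [Matrix.cons_val_one, Matrix.head_cons, Matrix.cons_val_zero] at h
    have := congrFun h idx
    rw [Pi.smul_apply, Pi.single_eq_of_ne hji] at this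
    simp at this
    exact hidx this.symm

lemma coplanar_of_crossings {m : ℕ} (L : Fin m → Set (Fin 3 → ℝ)) (hL : ∀ i, IsLine (L i))
    (q : Fin m → Fin m → (Fin 3 → ℝ))
    (hq : ∀ i j, i ≠ j → L i ≠ L j ∧ q i j ∈ L i ∧ q i j ∈ L j)
    (hdist : ∀ i j i' j', i ≠ j → i' ≠ j' → q i j = q i' j' → s(i, j) = s(i', j')) :
    ∃ P, IsPlane P ∧ ∀ i, L i ⊆ P := by
  rcases Nat.lt_or_ge m 2 with hm | hm
  · by_cases h0 : m = 0
    · subst h0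
      refine ⟨{x | ∃ s t : ℝ, x = (0 : Fin 3 → ℝ) + s • (Pi.single 0 1 : Fin 3 → ℝ)
          + t • (Pi.single 1 1 : Fin 3 → ℝ)},
        ⟨0, Pi.single 0 1, Pi.single 1 1, ?_, rfl⟩, fun i => i.elim0⟩
      refine linearIndependent_fin2.mpr ⟨?_, ?_⟩
      · simp only [Matrix.cons_val_one, Matrix.head_cons]
        intro h
        have := congrFun h 1
        simp [Pi.single_eq_same] at this
      · intro a h
        simp only [Matrix.cons_val_one, Matrix.head_cons, Matrix.cons_val_zero] at h
        have := congrFun h 0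
        rw [Pi.smul_apply, Pi.single_eq_same, Pi.single_eq_of_ne (by decide : (0 : Fin 3) ≠ 1)]
          at this
        simp at this
    · -- m = 1
      obtain ⟨i0, hi0v⟩ : ∃ i : Fin m, i.val = 0 := ⟨⟨0, by omega⟩, rfl⟩
      obtain ⟨p, u, hu, hrep⟩ := hL i0
      obtain ⟨w, hw⟩ := exists_indep hu
      refine ⟨{x | ∃ s t : ℝ, x = p + s • u + t • w}, ⟨p, u, w, hw, rfl⟩, fun i x hx => ?_⟩
      have hii : i = i0 := by
        apply Fin.ext
        have h1 := i.isLt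
        omega
      rw [hii, hrep] at hx
      obtain ⟨t, rfl⟩ := hx
      exact ⟨t, 0, by module⟩
  · -- m ≥ 2
    obtain ⟨i0, hi0v⟩ : ∃ i : Fin m, i.val = 0 := ⟨⟨0, by omega⟩, rfl⟩
    obtain ⟨i1, hi1v⟩ : ∃ i : Fin m, i.val = 1 := ⟨⟨1, by omega⟩, rfl⟩
    have h01 : i0 ≠ i1 := by
      intro h
      have := congrArg Fin.val h
      omega
    obtain ⟨hL01, hq0, hq1⟩ := hq i0 i1 h01
    obtain ⟨u0, hu0, hrep0⟩ := line_rep (hL i0) hq0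
    obtain ⟨u1, hu1, hrep1⟩ := line_rep (hL i1) hq1
    have hindep : LinearIndependent ℝ ![u0, u1] := by
      by_contra hdep
      rw [linearIndependent_fin2] at hdep
      push_neg at hdep
      simp only [Matrix.cons_val_one, Matrix.head_cons, Matrix.cons_val_zero] at hdep
      obtain ⟨a, ha⟩ := hdep hu1
      have hane : a ≠ 0 := by
        rintro rfl
        rw [zero_smul] at ha
        exact hu0 ha.symm
      exact hL01 (by rw [hrep0, hrep1, line_through_eq hane ha.symm])
    refine ⟨{x | ∃ s t : ℝ, x = q i0 i1 + s • u0 + t • u1}, ⟨_, _, _, hindep, rfl⟩, ?_⟩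
    intro i x hx
    by_cases hi0 : i = i0
    · rw [hi0, hrep0] at hx
      obtain ⟨t, rfl⟩ := hx
      exact ⟨t, 0, by module⟩
    by_cases hi1 : i = i1
    · rw [hi1, hrep1] at hx
      obtain ⟨t, rfl⟩ := hx
      exact ⟨0, t, by module⟩
    obtain ⟨hLa, ha1, ha2⟩ := hq i0 i (Ne.symm hi0)
    obtain ⟨hLb, hb1, hb2⟩ := hq i1 i (Ne.symm hi1)
    have hab : q i0 i ≠ q i1 i := by
      intro h
      have := hdist i0 i i1 i (Ne.symm hi0) (Ne.symm hi1) h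
      rw [Sym2.eq_iff] at this
      rcases this with ⟨h1, -⟩ | ⟨-, h2⟩
      · exact h01 h1
      · exact hi1 h2
    have haP : ∃ s t : ℝ, q i0 i = q i0 i1 + s • u0 + t • u1 := by
      rw [hrep0] at ha1
      obtain ⟨t, ht⟩ := ha1
      exact ⟨t, 0, by rw [ht]; module⟩
    have hbP : ∃ s t : ℝ, q i1 i = q i0 i1 + s • u0 + t • u1 := by
      rw [hrep1] at hb1
      obtain ⟨t, ht⟩ := hb1
      exact ⟨0, t, by rw [ht]; module⟩
    obtain ⟨sa, ta, ha⟩ := haP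
    obtain ⟨sb, tb, hb⟩ := hbP
    obtain ⟨dd, hdd, hrepi⟩ := line_rep (hL i) ha2
    rw [hrepi] at hb2 hx
    obtain ⟨t₀, ht₀⟩ := hb2
    have ht₀ne : t₀ ≠ 0 := by
      rintro rfl
      apply hab
      rw [ht₀]
      module
    have hddval : dd = t₀⁻¹ • (q i1 i - q i0 i) := by
      rw [ht₀, smul_sub, smul_add, smul_smul, inv_mul_cancel₀ ht₀ne, one_smul]
      module
    obtain ⟨t, htx⟩ := hx
    refine ⟨sa + (t * t₀⁻¹) * (sb - sa), ta + (t * t₀⁻¹) * (tb - ta), ?_⟩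
    rw [htx, hddval, ha, hb]
    module

/-- transfer a line cover along an affine map that is injective on the lines and
maps lines to lines -/
def LineCover.transfer {V : Type*} {G : SimpleGraph V} {d e k : ℕ} (c : LineCover G d k)
    (f : (Fin d → ℝ) → (Fin e → ℝ))
    (haff : ∀ (a b : Fin d → ℝ) (s : ℝ), f (a + s • (b - a)) = f a + s • (f b - f a))
    (hinj : ∀ x y, (∃ i, x ∈ c.lines i) → (∃ j, y ∈ c.lines j) → f x = f y → x = y)
    (hline : ∀ i, IsLine (f '' c.lines i)) : LineCover G e k where
  pos := f ∘ c.pos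
  inj := fun u v h => c.inj (hinj _ _ (c.coversV u) (c.coversV v) h)
  lines := fun i => f '' c.lines i
  isLine := hline
  coversV := fun v => (c.coversV v).imp fun _ hi => ⟨c.pos v, hi, rfl⟩
  coversE := by
    intro u v huv
    obtain ⟨i, hi⟩ := c.coversE huv
    refine ⟨i, ?_⟩
    intro x hx
    rw [segment_eq_image'] at hx
    obtain ⟨θ, hθ, hxe⟩ := hx
    exact ⟨c.pos u + θ • (c.pos v - c.pos u),
      hi (by rw [segment_eq_image']; exact ⟨θ, hθ, rfl⟩),
      by rw [haff]; exact hxe⟩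
  noCross := by
    intro u v a b huv hab hne x hx
    obtain ⟨i, hi⟩ := c.coversE huv
    obtain ⟨j, hj⟩ := c.coversE hab
    obtain ⟨hx1, hx2⟩ := hx
    rw [segment_eq_image'] at hx1 hx2
    obtain ⟨θ, hθ, hxe⟩ := hx1
    obtain ⟨σ, hσ, hxe2⟩ := hx2
    have hy1 : c.pos u + θ • (c.pos v - c.pos u) ∈ segment ℝ (c.pos u) (c.pos v) := by
      rw [segment_eq_image']; exact ⟨θ, hθ, rfl⟩
    have hy2 : c.pos a + σ • (c.pos b - c.pos a) ∈ segment ℝ (c.pos a) (c.pos b) := by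
      rw [segment_eq_image']; exact ⟨σ, hσ, rfl⟩
    have hfy1 : f (c.pos u + θ • (c.pos v - c.pos u)) = x := by rw [haff]; exact hxe
    have hfy2 : f (c.pos a + σ • (c.pos b - c.pos a)) = x := by rw [haff]; exact hxe2
    have hy12 : c.pos u + θ • (c.pos v - c.pos u) = c.pos a + σ • (c.pos b - c.pos a) :=
      hinj _ _ ⟨i, hi hy1⟩ ⟨j, hj hy2⟩ (by rw [hfy1, hfy2])
    obtain ⟨w, hw1, hw2, hw3⟩ := c.noCross huv hab hne _ ⟨hy1, hy12 ▸ hy2⟩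
    exact ⟨w, hw1, hw2, by rw [← hfy1, hw3]; rfl⟩

lemma planeCover_to_2 {V : Type*} {G : SimpleGraph V} {m : ℕ} (c : LineCover G 3 m)
    {P : Set (Fin 3 → ℝ)} (hP : IsPlane P) (hsub : ∀ i, c.lines i ⊆ P) :
    Nonempty (LineCover G 2 m) := by
  obtain ⟨p, u, v, hind, rfl⟩ := hP
  set combo : (Fin 2 → ℝ) →ₗ[ℝ] (Fin 3 → ℝ) :=
    { toFun := fun c' => c' 0 • u + c' 1 • v
      map_add' := by intro a b; simp only [Pi.add_apply]; module
      map_smul' := by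
        intro r a; simp only [Pi.smul_apply, RingHom.id_apply, smul_eq_mul]; module }
    with hcombo
  have hcomboval : ∀ c' : Fin 2 → ℝ, combo c' = c' 0 • u + c' 1 • v := fun _ => rfl
  have hker : LinearMap.ker combo = ⊥ := by
    rw [LinearMap.ker_eq_bot']
    intro c' hc'
    have hz := Fintype.linearIndependent_iff.mp hind c' (by
      rw [Fin.sum_univ_two]
      simp only [Matrix.cons_val_zero, Matrix.cons_val_one, Matrix.head_cons]
      rw [← hcomboval]
      exact hc')
    funext i
    exact hz i
  obtain ⟨g, hg⟩ := combo.exists_leftInverse_of_injective hker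
  have hgc : ∀ c' : Fin 2 → ℝ, g (combo c') = c' := fun c' => LinearMap.congr_fun hg c'
  set f : (Fin 3 → ℝ) → (Fin 2 → ℝ) := fun x => g (x - p) with hfdef
  have hmemP : ∀ x : Fin 3 → ℝ, (∃ i, x ∈ c.lines i) → ∃ c' : Fin 2 → ℝ, x = p + combo c' := by
    intro x ⟨i, hi⟩
    obtain ⟨s, t, hst⟩ := hsub i hi
    exact ⟨![s, t], by
      rw [hst, hcomboval]
      simp only [Matrix.cons_val_zero, Matrix.cons_val_one, Matrix.head_cons]
      module⟩
  have haff : ∀ (a b : Fin 3 → ℝ) (s : ℝ), f (a + s • (b - a)) = f a + s • (f b - f a) := by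
    intro a b s
    rw [hfdef]
    simp only
    have h1 : a + s • (b - a) - p = (a - p) + s • ((b - p) - (a - p)) := by module
    rw [h1]
    simp only [map_add, map_smul, map_sub]
  have hinj : ∀ x y, (∃ i, x ∈ c.lines i) → (∃ j, y ∈ c.lines j) → f x = f y → x = y := by
    intro x y hx hy hfxy
    obtain ⟨cx, hcx⟩ := hmemP x hx
    obtain ⟨cy, hcy⟩ := hmemP y hy
    rw [hfdef] at hfxy
    simp only at hfxy
    rw [hcx, hcy] at hfxy ⊢
    have h1 : p + combo cx - p = combo cx := by module
    have h2 : p + combo cy - p = combo cy := by module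
    rw [h1, h2, hgc, hgc] at hfxy
    rw [hfxy]
  have hline : ∀ i, IsLine (f '' c.lines i) := by
    intro i
    obtain ⟨pz, w, hw, hrepL⟩ := c.isLine i
    have hpz : pz ∈ c.lines i := by rw [hrepL]; exact ⟨0, by module⟩
    have hpzw : pz + w ∈ c.lines i := by rw [hrepL]; exact ⟨1, by module⟩
    have hgw : g w ≠ 0 := by
      intro hgw0
      obtain ⟨c1, hc1⟩ := hmemP pz ⟨i, hpz⟩
      obtain ⟨c2, hc2⟩ := hmemP (pz + w) ⟨i, hpzw⟩
      have hwc : w = combo (c2 - c1) := by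
        have h' : w = (p + combo c2) - (p + combo c1) := by
          rw [← hc1, ← hc2]; module
        rw [h', map_sub]
        module
      have : g w = c2 - c1 := by rw [hwc, hgc]
      apply hw
      rw [hwc, ← this, hgw0, map_zero]
    have hfl : ∀ t : ℝ, f (pz + t • w) = f pz + t • g w := by
      intro t
      rw [hfdef]
      simp only
      have h1 : pz + t • w - p = (pz - p) + t • w := by module
      rw [h1, map_add, map_smul]
    refine ⟨f pz, g w, hgw, ?_⟩
    ext y
    constructor
    · rintro ⟨x, hx, rfl⟩
      rw [hrepL] at hx
      obtain ⟨t, rfl⟩ := hx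
      exact ⟨t, hfl t⟩
    · rintro ⟨t, rfl⟩
      exact ⟨pz + t • w, by rw [hrepL]; exact ⟨t, rfl⟩, hfl t⟩
  exact ⟨c.transfer f haff hinj hline⟩

lemma cover_2_to_3 {V : Type*} {G : SimpleGraph V} {m : ℕ} (c : LineCover G 2 m) :
    Nonempty (LineCover G 3 m) := by
  set f : (Fin 2 → ℝ) → (Fin 3 → ℝ) := fun x => ![x 0, x 1, 0] with hfdef
  have hf0 : ∀ x, f x 0 = x 0 := fun x => rfl
  have hf1 : ∀ x, f x 1 = x 1 := fun x => rfl
  have hf2 : ∀ x, f x 2 = 0 := fun x => rfl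
  have hflin : ∀ (a b : Fin 2 → ℝ) (s : ℝ), f (a + s • b) = f a + s • f b := by
    intro a b s
    funext j
    fin_cases j <;>
      simp [hfdef, Matrix.cons_val_zero, Matrix.cons_val_one, Matrix.head_cons]
  have haff : ∀ (a b : Fin 2 → ℝ) (s : ℝ), f (a + s • (b - a)) = f a + s • (f b - f a) := by
    intro a b s
    have h1 : b - a = b + (-1 : ℝ) • a := by module
    have h2 : f b - f a = f b + (-1 : ℝ) • f a := by module
    rw [h1, h2, hflin, hflin]
  have hinj : ∀ x y : Fin 2 → ℝ, f x = f y → x = y := by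
    intro x y h
    funext j
    fin_cases j
    · have := congrFun h 0; rwa [hf0, hf0] at this
    · have := congrFun h 1; rwa [hf1, hf1] at this
  have hline : ∀ i, IsLine (f '' c.lines i) := by
    intro i
    obtain ⟨pz, w, hw, hrepL⟩ := c.isLine i
    have hfw : f w ≠ 0 := by
      intro h
      apply hw
      funext j
      fin_cases j
      · have := congrFun h 0; rwa [hf0] at this
      · have := congrFun h 1; rwa [hf1] at this
    have hfl : ∀ t : ℝ, f (pz + t • w) = f pz + t • f w := fun t => hflin pz w t
    refine ⟨f pz, f w, hfw, ?_⟩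
    ext y
    constructor
    · rintro ⟨x, hx, rfl⟩
      rw [hrepL] at hx
      obtain ⟨t, rfl⟩ := hx
      exact ⟨t, hfl t⟩
    · rintro ⟨t, rfl⟩
      exact ⟨pz + t • w, by rw [hrepL]; exact ⟨t, rfl⟩, hfl t⟩
  exact ⟨c.transfer f haff (fun x y _ _ h => hinj x y h) hline⟩

lemma planar_of_card {V : Type*} {G : SimpleGraph V} {m : ℕ} (c : LineCover G 3 m)
    (h : {v : V | (G.neighborSet v).ncard = 4}.ncard = m.choose 2) :
    ∃ P, IsPlane P ∧ ∀ i, c.lines i ⊆ P := by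
  rcases Nat.lt_or_ge m 2 with hm | hm
  · have hnopair : ∀ i j : Fin m, i ≠ j → False := by
      intro i j hij
      apply hij
      apply Fin.ext
      have h1 := i.isLt
      have h2 := j.isLt
      omega
    exact coplanar_of_crossings c.lines c.isLine (fun _ _ => 0)
      (fun i j hij => (hnopair i j hij).elim)
      (fun i j i' j' hij _ _ => (hnopair i j hij).elim)
  · obtain ⟨q, hq, hdist⟩ := equality_structure c h hm
    exact coplanar_of_crossings c.lines c.isLine q hq hdist


/-- If `G` has exactly `C(k,2)` vertices of degree 4 and admits a straight-line drawing
in `ℝ³` covered by `k` lines, then in every such cover all `k` lines lie in a common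
plane; consequently `ρ¹_3(G) = ρ¹_2(G)`. -/
theorem stmt_6 {V : Type*} (G : SimpleGraph V) (k : ℕ)
    (hdeg : {v : V | (G.neighborSet v).ncard = 4}.ncard = k.choose 2)
    (hcov : Nonempty (LineCover G 3 k)) :
    (∀ c : LineCover G 3 k, ∃ P, IsPlane P ∧ ∀ i, c.lines i ⊆ P) ∧
      rho1 G 3 = rho1 G 2 := by
  constructor
  · intro c
    exact planar_of_card c hdeg
  · have hknon : k ∈ {n | Nonempty (LineCover G 3 n)} := hcov
    have hmmem : rho1 G 3 ∈ {n | Nonempty (LineCover G 3 n)} :=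
      Nat.sInf_mem ⟨k, hknon⟩
    obtain ⟨cm⟩ := hmmem
    have hmk : rho1 G 3 ≤ k := Nat.sInf_le hknon
    have heq : {v : V | (G.neighborSet v).ncard = 4}.ncard = (rho1 G 3).choose 2 :=
      le_antisymm (ncard_deg4_le cm) (hdeg ▸ Nat.choose_le_choose 2 hmk)
    obtain ⟨P, hP, hsub⟩ := planar_of_card cm heq
    obtain ⟨c2⟩ := planeCover_to_2 cm hP hsub
    have h23 : rho1 G 2 ≤ rho1 G 3 := Nat.sInf_le ⟨c2⟩
    have hmem2 : rho1 G 2 ∈ {n | Nonempty (LineCover G 2 n)} :=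
      Nat.sInf_mem ⟨rho1 G 3, ⟨c2⟩⟩
    obtain ⟨c2'⟩ := hmem2
    obtain ⟨c3'⟩ := cover_2_to_3 c2'
    have h32 : rho1 G 3 ≤ rho1 G 2 := Nat.sInf_le ⟨c3'⟩
    exact le_antisymm h32 h23
end

section
/- If a connected graph G (not a path) admits a k-line cover in ℝ², then G has fewer than 2k² vertices of degree 1. -/
/-! ### Auxiliary geometric lemmas -/

section geom
variable {d : ℕ}

lemma isLine_range {L : Set (Fin d → ℝ)} (h : IsLine L) :
    ∃ p v : Fin d → ℝ, v ≠ 0 ∧ L = Set.range (fun t : ℝ => p + t • v) := by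
  obtain ⟨p, v, hv, hL⟩ := h
  refine ⟨p, v, hv, ?_⟩
  rw [hL]; ext x; simp [Set.range, eq_comm]

lemma phi_inj {p v : Fin d → ℝ} (hv : v ≠ 0) :
    Function.Injective (fun t : ℝ => p + t • v) := by
  intro s t h
  simp only [add_right_inj] at h
  have h2 : (s - t) • v = 0 := by rw [sub_smul, h, sub_self]
  rcases smul_eq_zero.mp h2 with h3 | h3
  · linarith [sub_eq_zero.mp h3]
  · exact absurd h3 hv

lemma segment_phi {p v : Fin d → ℝ} (a b : ℝ) :
    segment ℝ (p + a • v) (p + b • v) = (fun t : ℝ => p + t • v) '' Set.uIcc a b := by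
  rw [← segment_eq_uIcc, segment_eq_image ℝ a b, segment_eq_image ℝ (p + a • v) (p + b • v),
    Set.image_image]
  apply Set.image_congr
  intro θ _
  show (1 - θ) • (p + a • v) + θ • (p + b • v) = p + ((1 - θ) * a + θ * b) • v
  module

lemma mem_segment_phi_of {d : ℕ} {p v : Fin d → ℝ} {a b t : ℝ} (ht : t ∈ Set.uIcc a b) :
    (p + t • v) ∈ segment ℝ (p + a • v) (p + b • v) := by
  rw [segment_phi]; exact ⟨t, ht, rfl⟩

lemma param_of_mem_segment {d : ℕ} {p v : Fin d → ℝ} {a b : ℝ} {x : Fin d → ℝ}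
    (hx : x ∈ segment ℝ (p + a • v) (p + b • v)) :
    ∃ t ∈ Set.uIcc a b, x = p + t • v := by
  rw [segment_phi] at hx
  obtain ⟨t, ht, hteq⟩ := hx
  exact ⟨t, ht, hteq.symm⟩

lemma line_eq_of_mem {L : Set (Fin d → ℝ)} (h : IsLine L) {a b : Fin d → ℝ}
    (ha : a ∈ L) (hb : b ∈ L) (hab : a ≠ b) :
    L = {x | ∃ t : ℝ, x = a + t • (b - a)} := by
  obtain ⟨p, v, hv, rfl⟩ := h
  obtain ⟨s, rfl⟩ := ha
  obtain ⟨t, rfl⟩ := hb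
  have hst : t - s ≠ 0 := by
    intro h0
    exact hab (by rw [sub_eq_zero.mp h0])
  have key : (p + t • v) - (p + s • v) = (t - s) • v := by module
  ext x
  constructor
  · rintro ⟨u, rfl⟩
    refine ⟨(u - s)/(t - s), ?_⟩
    rw [key, smul_smul, div_mul_cancel₀ _ hst]
    module
  · rintro ⟨r, rfl⟩
    refine ⟨s + r * (t - s), ?_⟩
    rw [key, smul_smul]
    module

lemma inter_subsingleton {L1 L2 : Set (Fin d → ℝ)} (h1 : IsLine L1) (h2 : IsLine L2)
    (hne : L1 ≠ L2) : (L1 ∩ L2).Subsingleton := by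
  intro a ha b hb
  by_contra hab
  exact hne ((line_eq_of_mem h1 ha.1 hb.1 hab).trans (line_eq_of_mem h2 ha.2 hb.2 hab).symm)

end geom

/-! ### Real-line side lemmas -/

lemma pair_le {x y p : ℝ} (hx : x ≤ p) (hy : y ≤ p) :
    x ∈ Set.uIcc y p ∨ y ∈ Set.uIcc x p := by
  rcases le_total x y with h | h
  · right; rw [Set.mem_uIcc]; left; exact ⟨h, hy⟩
  · left; rw [Set.mem_uIcc]; left; exact ⟨h, hx⟩

lemma pair_ge {x y p : ℝ} (hx : p ≤ x) (hy : p ≤ y) :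
    x ∈ Set.uIcc y p ∨ y ∈ Set.uIcc x p := by
  rcases le_total x y with h | h
  · left; rw [Set.mem_uIcc]; right; exact ⟨hx, h⟩
  · right; rw [Set.mem_uIcc]; right; exact ⟨hy, h⟩

lemma same_side (a b c p : ℝ) :
    a ∈ Set.uIcc b p ∨ b ∈ Set.uIcc a p ∨ a ∈ Set.uIcc c p ∨ c ∈ Set.uIcc a p ∨
      b ∈ Set.uIcc c p ∨ c ∈ Set.uIcc b p := by
  rcases le_total a p with h1 | h1 <;> rcases le_total b p with h2 | h2 <;>
    rcases le_total c p with h3 | h3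
  · rcases pair_le h1 h2 with h | h <;> tauto
  · rcases pair_le h1 h2 with h | h <;> tauto
  · rcases pair_le h1 h3 with h | h <;> tauto
  · rcases pair_ge h2 h3 with h | h <;> tauto
  · rcases pair_le h2 h3 with h | h <;> tauto
  · rcases pair_ge h1 h3 with h | h <;> tauto
  · rcases pair_ge h1 h2 with h | h <;> tauto
  · rcases pair_ge h1 h2 with h | h <;> tauto

/-! ### Graph-theoretic auxiliary lemmas -/

section graph
variable {V : Type*}

/-- The subgraph of edges drawn inside the line `ℓ`. -/
def lineSub (G : SimpleGraph V) (pos : V → Fin 2 → ℝ) (ℓ : Set (Fin 2 → ℝ)) :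
    SimpleGraph V where
  Adj a b := G.Adj a b ∧ segment ℝ (pos a) (pos b) ⊆ ℓ
  symm := ⟨by rintro a b ⟨h1, h2⟩; exact ⟨h1.symm, by rwa [segment_symm]⟩⟩
  loopless := ⟨by rintro a ⟨h1, _⟩; exact G.loopless.irrefl a h1⟩

lemma lineSub_support_mem (G : SimpleGraph V) (pos : V → Fin 2 → ℝ) (ℓ : Set (Fin 2 → ℝ))
    {a b : V} (W : (lineSub G pos ℓ).Walk a b) (ha : pos a ∈ ℓ) :
    ∀ y ∈ W.support, pos y ∈ ℓ := by
  induction W with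
  | nil => intro y hy; rw [SimpleGraph.Walk.support_nil, List.mem_singleton] at hy; rwa [hy]
  | @cons u c w h q ih =>
    intro y hy
    rw [SimpleGraph.Walk.support_cons, List.mem_cons] at hy
    rcases hy with rfl | hy
    · exact ha
    · exact ih (h.2 (right_mem_segment ℝ _ _)) y hy

lemma walk_cover {H : SimpleGraph V} (f : V → ℝ) {a b : V} (W : H.Walk a b) :
    ∀ s ∈ Set.uIcc (f a) (f b), s = f b ∨
      ∃ d ∈ W.darts, s ∈ Set.uIcc (f d.fst) (f d.snd) := by
  induction W with
  | nil => intro s hs; left; simpa [Set.uIcc_self] using hs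
  | @cons u c w h q ih =>
    intro s hs
    rcases Set.uIcc_subset_uIcc_union_uIcc (b := f c) hs with hs1 | hs1
    · right
      exact ⟨⟨(u, c), h⟩, by simp [SimpleGraph.Walk.darts_cons], hs1⟩
    · rcases ih s hs1 with h1 | ⟨d, hd, hd2⟩
      · left; exact h1
      · right; exact ⟨d, by simp [SimpleGraph.Walk.darts_cons, hd], hd2⟩

lemma path_interior {H : SimpleGraph V} {v1 a b : V} (P : H.Walk a b) (hP : P.IsPath)
    (hv : v1 ∈ P.support) (ha : v1 ≠ a) (hb : v1 ≠ b) :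
    ∃ n1 n2, H.Adj v1 n1 ∧ H.Adj v1 n2 ∧ n1 ≠ n2 := by
  classical
  set P1 := P.takeUntil v1 hv with hP1
  set P2 := P.dropUntil v1 hv with hP2
  have hspec : P1.append P2 = P := P.take_spec hv
  have hnodup : P.support.Nodup := hP.support_nodup
  have hsupp : P.support = P1.support ++ P2.support.tail := by
    rw [← hspec, SimpleGraph.Walk.support_append]
  have hn1nil : ¬ P1.reverse.Nil := SimpleGraph.Walk.not_nil_of_ne ha
  have hn2nil : ¬ P2.Nil := SimpleGraph.Walk.not_nil_of_ne hb
  refine ⟨P1.reverse.getVert 1, P2.getVert 1,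
    SimpleGraph.Walk.adj_snd (p := P1.reverse) hn1nil, SimpleGraph.Walk.adj_snd (p := P2) hn2nil, ?_⟩
  intro heq
  have hm1 : P1.reverse.getVert 1 ∈ P1.support := by
    have h0 : P1.reverse.getVert 1 ∈ P1.reverse.support := by
      rw [SimpleGraph.Walk.mem_support_iff_exists_getVert]
      have hl : 0 < P1.reverse.length := SimpleGraph.Walk.not_nil_iff_lt_length.mp hn1nil
      exact ⟨1, rfl, hl⟩
    rwa [SimpleGraph.Walk.support_reverse, List.mem_reverse] at h0
  have hm2 : P2.getVert 1 ∈ P2.support.tail := by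
    have h1 : v1 :: P2.tail.support = P2.support := P2.cons_support_tail hn2nil
    have h2 : P2.support.tail = P2.tail.support := by rw [← h1, List.tail_cons]
    rw [h2]
    exact P2.tail.start_mem_support
  rw [hsupp] at hnodup
  have hdisj := List.disjoint_of_nodup_append hnodup
  exact hdisj hm1 (heq ▸ hm2)

end graph

lemma path_iso {V : Type*} [Fintype V] (G : SimpleGraph V) (hconn : G.Connected)
    (ξ : V → ℝ) (hinj : Function.Injective ξ)
    (hbet : ∀ a b c : V, G.Adj a b → ξ c ∈ Set.uIcc (ξ a) (ξ b) → c = a ∨ c = b) :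
    Nonempty (G ≃g SimpleGraph.pathGraph (Fintype.card V)) := by
  classical
  letI : LinearOrder V := LinearOrder.lift' ξ hinj
  have hle : ∀ {x y : V}, x ≤ y ↔ ξ x ≤ ξ y := Iff.rfl
  have hlt : ∀ {x y : V}, x < y ↔ ξ x < ξ y := by
    intro x y
    rw [lt_iff_le_not_ge, lt_iff_le_not_ge, hle, hle]
  set n := Fintype.card V with hn
  let e : Fin n ≃o V := Fintype.orderIsoFinOfCardEq V rfl
  have claim1 : ∀ x y c : V, G.Adj x y → x < c → c < y → False := by
    intro x y c hadj h1 h2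
    have : ξ c ∈ Set.uIcc (ξ x) (ξ y) := by
      rw [Set.mem_uIcc]
      exact Or.inl ⟨le_of_lt (hlt.mp h1), le_of_lt (hlt.mp h2)⟩
    rcases hbet x y c hadj this with rfl | rfl
    · exact lt_irrefl _ h1
    · exact lt_irrefl _ h2
  have claim3 : ∀ x y : V, x < y → (∀ c : V, ¬(x < c ∧ c < y)) → G.Adj x y := by
    intro x y hxy hnb
    have hW : ∀ (a b : V), G.Walk a b → a ≤ x → y ≤ b → G.Adj x y := by
      intro a b W
      induction W with
      | nil =>
        intro h1 h2
        exact absurd (lt_of_lt_of_le (lt_of_le_of_lt h1 hxy) h2) (lt_irrefl _)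
      | @cons u c w h q ih =>
        intro h1 h2
        rcases le_or_gt c x with h3 | h3
        · exact ih h3 h2
        · have h4 : y ≤ c := not_lt.mp (fun hlt' => hnb c ⟨h3, hlt'⟩)
          have hxm : ξ x ∈ Set.uIcc (ξ u) (ξ c) := by
            rw [Set.mem_uIcc]
            exact Or.inl ⟨hle.mp h1, le_of_lt (hlt.mp h3)⟩
          have hym : ξ y ∈ Set.uIcc (ξ u) (ξ c) := by
            rw [Set.mem_uIcc]
            exact Or.inl ⟨hle.mp (le_trans h1 (le_of_lt hxy)), hle.mp h4⟩
          rcases hbet u c x h hxm with h5 | h5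
          · rcases hbet u c y h hym with h6 | h6
            · exact absurd (h6 ▸ h5 ▸ hxy) (lt_irrefl _)
            · exact h5 ▸ h6 ▸ h
          · exact absurd (h5 ▸ h3) (lt_irrefl _)
    obtain ⟨W⟩ := hconn.preconnected x y
    exact hW x y W le_rfl le_rfl
  have key : ∀ i j : Fin n, G.Adj (e i) (e j) ↔ ((i : ℕ) + 1 = j ∨ (j : ℕ) + 1 = i) := by
    have emono := (Fintype.orderIsoFinOfCardEq V rfl).strictMono
    have forward : ∀ i j : Fin n, (i : ℕ) < j → G.Adj (e i) (e j) → (i : ℕ) + 1 = j := by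
      intro i j hij hadj
      by_contra hne
      have hij2 : (i : ℕ) + 1 < j := by omega
      have hjn : ((i : ℕ) + 1) < n := lt_trans hij2 j.isLt
      set c := e ⟨(i : ℕ) + 1, hjn⟩ with hc
      have h1 : e i < c := emono (by simp [Fin.lt_def])
      have h2 : c < e j := emono (by simp [Fin.lt_def]; omega)
      exact claim1 _ _ _ hadj h1 h2
    have backward : ∀ i j : Fin n, (i : ℕ) + 1 = j → G.Adj (e i) (e j) := by
      intro i j hij
      have h1 : e i < e j := emono (by rw [Fin.lt_def]; omega)
      refine claim3 _ _ h1 ?_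
      rintro c ⟨hc1, hc2⟩
      have hm1 : i < e.symm c :=
        e.lt_iff_lt.mp (show e i < e (e.symm c) by rwa [e.apply_symm_apply])
      have hm2 : e.symm c < j :=
        e.lt_iff_lt.mp (show e (e.symm c) < e j by rwa [e.apply_symm_apply])
      rw [Fin.lt_def] at hm1 hm2
      omega
    intro i j
    constructor
    · intro hadj
      rcases lt_trichotomy (i : ℕ) (j : ℕ) with hij | hij | hij
      · exact Or.inl (forward i j hij hadj)
      · exfalso
        have : i = j := Fin.ext hij
        subst this
        exact G.loopless.irrefl _ hadj
      · exact Or.inr (forward j i hij hadj.symm)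
    · rintro (hij | hij)
      · exact backward i j hij
      · exact (backward j i hij).symm
  refine ⟨⟨e.symm.toEquiv, ?_⟩⟩
  intro a b
  have ha : e (e.symm a) = a := e.apply_symm_apply a
  have hb : e (e.symm b) = b := e.apply_symm_apply b
  rw [SimpleGraph.pathGraph_adj]
  constructor
  · intro hp
    have := (key (e.symm a) (e.symm b)).mpr (by simpa using hp)
    rwa [ha, hb] at this
  · intro hadj
    have := (key (e.symm a) (e.symm b)).mp (by rwa [ha, hb])
    simpa using this

/-! ### Lemmas about line covers -/

lemma vertex_on_edge {V : Type*} {G : SimpleGraph V} {k : ℕ} (C : LineCover G 2 k)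
    {c u a b : V} (hcu : G.Adj c u) (hab : G.Adj a b)
    (hc : C.pos c ∈ segment ℝ (C.pos a) (C.pos b)) :
    c = a ∨ c = b := by
  by_cases he : ({c, u} : Set V) = {a, b}
  · have : c ∈ ({a, b} : Set V) := he ▸ (by simp : c ∈ ({c, u} : Set V))
    simpa using this
  · obtain ⟨w, hw1, hw2, hw3⟩ :=
      C.noCross hcu hab he (C.pos c) ⟨left_mem_segment ℝ _ _, hc⟩
    have hwc : w = c := by
      rcases hw1 with rfl | rfl
      · rfl
      · exact absurd (C.inj hw3.symm) (fun h => G.loopless.irrefl c (h ▸ hcu))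
    subst hwc
    exact hw2

/-- The data extracted for each degree-one vertex. -/
def GoodData {V : Type*} (G : SimpleGraph V) {k : ℕ} (C : LineCover G 2 k)
    (ℓ ℓ' : Set (Fin 2 → ℝ)) (v : V) : Prop :=
  (G.neighborSet v).ncard = 1 ∧ C.pos v ∈ ℓ ∧
  (∀ x, G.Adj v x → segment ℝ (C.pos v) (C.pos x) ⊆ ℓ) ∧
  ∃ w, (lineSub G C.pos ℓ).Reachable v w ∧ C.pos w ∈ ℓ ∧ C.pos w ∈ ℓ' ∧
    ∃ x, G.Adj w x ∧ ¬ segment ℝ (C.pos w) (C.pos x) ⊆ ℓ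

lemma exists_good {V : Type*} [Fintype V] (G : SimpleGraph V) {k : ℕ} (C : LineCover G 2 k)
    (hconn : G.Connected) (hpath : ∀ n : ℕ, ¬ Nonempty (G ≃g SimpleGraph.pathGraph n))
    {v : V} (hv : (G.neighborSet v).ncard = 1) :
    ∃ i j : Fin k, C.lines i ≠ C.lines j ∧ GoodData G C (C.lines i) (C.lines j) v := by
  classical
  obtain ⟨u, hu⟩ := Set.ncard_eq_one.mp hv
  have hadj : G.Adj v u := by
    have : u ∈ G.neighborSet v := hu ▸ Set.mem_singleton u
    exact this
  obtain ⟨i, hi⟩ := C.coversE hadj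
  set ℓ := C.lines i with hℓ
  have hvedge : ∀ x, G.Adj v x → segment ℝ (C.pos v) (C.pos x) ⊆ ℓ := by
    intro x hx
    have hx2 : x ∈ G.neighborSet v := hx
    rw [hu, Set.mem_singleton_iff] at hx2
    subst hx2; exact hi
  have hposv : C.pos v ∈ ℓ := hi (left_mem_segment ℝ _ _)
  have hoff : ∃ w, (lineSub G C.pos ℓ).Reachable v w ∧
      ∃ x, G.Adj w x ∧ ¬ segment ℝ (C.pos w) (C.pos x) ⊆ ℓ := by
    by_contra hno
    push_neg at hno
    have step : ∀ (a b2 : V) (W : G.Walk a b2),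
        (lineSub G C.pos ℓ).Reachable v a → (lineSub G C.pos ℓ).Reachable v b2 := by
      intro a b2 W
      induction W with
      | nil => exact id
      | @cons x y z hxy q ih =>
        intro hva
        exact ih (hva.trans (SimpleGraph.Adj.reachable ⟨hxy, hno x hva y hxy⟩))
    have hreach : ∀ w, (lineSub G C.pos ℓ).Reachable v w := by
      intro w
      obtain ⟨W⟩ := hconn.preconnected v w
      exact step v w W (SimpleGraph.Reachable.refl v)
    have hpos : ∀ w, C.pos w ∈ ℓ := by
      intro w
      obtain ⟨W⟩ := hreach w
      exact lineSub_support_mem G C.pos ℓ W hposv w W.end_mem_support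
    obtain ⟨p₀, dv, hdv, hrange⟩ := isLine_range (C.isLine i)
    set φ : ℝ → (Fin 2 → ℝ) := fun t => p₀ + t • dv with hφ
    set τ : (Fin 2 → ℝ) → ℝ := Function.invFun φ with hτ
    have hτspec : ∀ x ∈ ℓ, φ (τ x) = x := by
      intro x hx
      rw [hℓ, hrange] at hx
      exact Function.invFun_eq hx
    set ξ : V → ℝ := fun w => τ (C.pos w) with hξ
    have hφξ : ∀ w, φ (ξ w) = C.pos w := fun w => hτspec _ (hpos w)
    have hinj : Function.Injective ξ := by
      intro a b hab
      apply C.inj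
      rw [← hφξ a, ← hφξ b, hab]
    have hbet : ∀ a b c : V, G.Adj a b → ξ c ∈ Set.uIcc (ξ a) (ξ b) → c = a ∨ c = b := by
      intro a b c hab hc
      have hseg : C.pos c ∈ segment ℝ (C.pos a) (C.pos b) := by
        rw [← hφξ a, ← hφξ b, hφ]
        rw [segment_phi]
        exact ⟨ξ c, hc, hφξ c⟩
      by_cases hca : c = a
      · exact Or.inl hca
      · obtain ⟨W⟩ := hconn.preconnected c a
        have hnil : ¬ W.Nil := SimpleGraph.Walk.not_nil_of_ne hca
        exact vertex_on_edge C (SimpleGraph.Walk.adj_snd (p := W) hnil) hab hseg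
    exact hpath _ (path_iso G hconn ξ hinj hbet)
  obtain ⟨w, hwR, x, hwx, hxoff⟩ := hoff
  obtain ⟨j, hj⟩ := C.coversE hwx
  refine ⟨i, j, fun hEq => hxoff (by rw [hℓ, hEq]; exact hj), hv, hposv, hvedge, w, hwR, ?_, ?_, x, hwx, hxoff⟩
  · obtain ⟨W⟩ := hwR
    exact lineSub_support_mem G C.pos ℓ W hposv w W.end_mem_support
  · exact hj (left_mem_segment ℝ _ _)

lemma good_pair {V : Type*} (G : SimpleGraph V) {k : ℕ} (C : LineCover G 2 k)
    {ℓ : Set (Fin 2 → ℝ)} (hIL : IsLine ℓ) {p : Fin 2 → ℝ} {va vb wb : V}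
    (hdeg : (G.neighborSet va).ncard = 1)
    (hvaℓ : C.pos va ∈ ℓ)
    (hvaedge : ∀ x, G.Adj va x → segment ℝ (C.pos va) (C.pos x) ⊆ ℓ)
    (hvap : C.pos va ≠ p)
    (hvbℓ : C.pos vb ∈ ℓ)
    (hR : (lineSub G C.pos ℓ).Reachable vb wb)
    (hwp : C.pos wb = p)
    (hwoff : ∃ x, G.Adj wb x ∧ ¬ segment ℝ (C.pos wb) (C.pos x) ⊆ ℓ)
    (hseg : C.pos va ∈ segment ℝ (C.pos vb) p) :
    va = vb := by
  classical
  by_contra hne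
  have hvawb : va ≠ wb := by
    rintro rfl
    obtain ⟨x, hx1, hx2⟩ := hwoff
    exact hx2 (hvaedge x hx1)
  obtain ⟨p₀, dv, hdv, hrange⟩ := isLine_range hIL
  set φ : ℝ → (Fin 2 → ℝ) := fun t => p₀ + t • dv with hφ
  set τ : (Fin 2 → ℝ) → ℝ := Function.invFun φ with hτd
  have hτspec : ∀ x ∈ ℓ, φ (τ x) = x := by
    intro x hx
    rw [hrange] at hx
    exact Function.invFun_eq hx
  obtain ⟨W0⟩ := hR
  set P : (lineSub G C.pos ℓ).Walk vb wb := W0.bypass with hPdef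
  have hPpath : P.IsPath := W0.bypass_isPath
  have hsupp : ∀ y ∈ P.support, C.pos y ∈ ℓ :=
    lineSub_support_mem G C.pos ℓ P hvbℓ
  have hwbℓ : C.pos wb ∈ ℓ := hsupp wb P.end_mem_support
  have hpℓ : p ∈ ℓ := hwp ▸ hwbℓ
  -- parameter of `va` lies between those of `vb` and `p`
  obtain ⟨t0, ht0mem, ht0eq⟩ : ∃ t ∈ Set.uIcc (τ (C.pos vb)) (τ p), C.pos va = φ t := by
    have h5 : C.pos va ∈ segment ℝ (φ (τ (C.pos vb))) (φ (τ p)) := by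
      rwa [hτspec _ hvbℓ, hτspec _ hpℓ]
    exact param_of_mem_segment h5
  have ht0 : t0 = τ (C.pos va) :=
    phi_inj hdv (ht0eq.symm.trans (hτspec _ hvaℓ).symm)
  rw [ht0] at ht0mem
  have hwcov := walk_cover (fun y => τ (C.pos y)) P (τ (C.pos va))
    (show τ (C.pos va) ∈ Set.uIcc (τ (C.pos vb)) (τ (C.pos wb)) by rw [hwp]; exact ht0mem)
  rcases hwcov with hend | ⟨d, hd, hdm⟩
  · have hend' : τ (C.pos va) = τ (C.pos wb) := hend
    have h7 := congrArg φ hend'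
    rw [hτspec _ hvaℓ, hτspec _ hwbℓ] at h7
    exact hvap (h7.trans hwp)
  · have hdadj := d.adj
    have hfstℓ : C.pos d.fst ∈ ℓ := hdadj.2 (left_mem_segment ℝ _ _)
    have hsndℓ : C.pos d.snd ∈ ℓ := hdadj.2 (right_mem_segment ℝ _ _)
    have hdm' : τ (C.pos va) ∈ Set.uIcc (τ (C.pos d.fst)) (τ (C.pos d.snd)) := hdm
    have h8 : φ (τ (C.pos va)) ∈
        segment ℝ (φ (τ (C.pos d.fst))) (φ (τ (C.pos d.snd))) :=
      mem_segment_phi_of hdm'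
    rw [hτspec _ hvaℓ, hτspec _ hfstℓ, hτspec _ hsndℓ] at h8
    obtain ⟨ua, hua⟩ := Set.ncard_eq_one.mp hdeg
    have hadjva : G.Adj va ua := by
      have : ua ∈ G.neighborSet va := hua ▸ Set.mem_singleton ua
      exact this
    have hmem : va ∈ P.support := by
      rcases vertex_on_edge C hadjva hdadj.1 h8 with h | h
      · exact h ▸ P.dart_fst_mem_support_of_mem_darts hd
      · exact h ▸ P.dart_snd_mem_support_of_mem_darts hd
    obtain ⟨n1, n2, hn1, hn2, hn12⟩ := path_interior P hPpath hmem hne hvawb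
    have h1 : n1 ∈ G.neighborSet va := hn1.1
    have h2 : n2 ∈ G.neighborSet va := hn2.1
    rw [hua, Set.mem_singleton_iff] at h1 h2
    exact hn12 (h1.trans h2.symm)

lemma good_three {V : Type*} (G : SimpleGraph V) {k : ℕ} (C : LineCover G 2 k)
    {ℓ ℓ' : Set (Fin 2 → ℝ)} (hIL : IsLine ℓ) (hIL' : IsLine ℓ') (hll : ℓ ≠ ℓ')
    {v1 v2 v3 : V}
    (h1 : GoodData G C ℓ ℓ' v1) (h2 : GoodData G C ℓ ℓ' v2) (h3 : GoodData G C ℓ ℓ' v3) :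
    v1 = v2 ∨ v1 = v3 ∨ v2 = v3 := by
  classical
  obtain ⟨hd1, hp1, he1, w1, hR1, hw1ℓ, hw1ℓ', hoff1⟩ := h1
  obtain ⟨hd2, hp2, he2, w2, hR2, hw2ℓ, hw2ℓ', hoff2⟩ := h2
  obtain ⟨hd3, hp3, he3, w3, hR3, hw3ℓ, hw3ℓ', hoff3⟩ := h3
  have hsub := inter_subsingleton hIL hIL' hll
  set p := C.pos w1 with hpdef
  have hq1 : C.pos w1 = p := rfl
  have hq2 : C.pos w2 = p := hsub ⟨hw2ℓ, hw2ℓ'⟩ ⟨hw1ℓ, hw1ℓ'⟩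
  have hq3 : C.pos w3 = p := hsub ⟨hw3ℓ, hw3ℓ'⟩ ⟨hw1ℓ, hw1ℓ'⟩
  have hnp1 : C.pos v1 ≠ p := by
    intro hq
    obtain rfl : v1 = w1 := C.inj (hq.trans hq1.symm)
    obtain ⟨x, hx1, hx2⟩ := hoff1
    exact hx2 (he1 x hx1)
  have hnp2 : C.pos v2 ≠ p := by
    intro hq
    obtain rfl : v2 = w2 := C.inj (hq.trans hq2.symm)
    obtain ⟨x, hx1, hx2⟩ := hoff2
    exact hx2 (he2 x hx1)
  have hnp3 : C.pos v3 ≠ p := by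
    intro hq
    obtain rfl : v3 = w3 := C.inj (hq.trans hq3.symm)
    obtain ⟨x, hx1, hx2⟩ := hoff3
    exact hx2 (he3 x hx1)
  obtain ⟨p₀, dv, hdv, hrange⟩ := isLine_range hIL
  set φ : ℝ → (Fin 2 → ℝ) := fun t => p₀ + t • dv with hφ
  set τ : (Fin 2 → ℝ) → ℝ := Function.invFun φ with hτd
  have hτspec : ∀ x ∈ ℓ, φ (τ x) = x := by
    intro x hx
    rw [hrange] at hx
    exact Function.invFun_eq hx
  have hpℓ : p ∈ ℓ := hw1ℓ
  have conv : ∀ x y : V, C.pos x ∈ ℓ → C.pos y ∈ ℓ →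
      τ (C.pos x) ∈ Set.uIcc (τ (C.pos y)) (τ p) → C.pos x ∈ segment ℝ (C.pos y) p := by
    intro x y hx hy hm
    have h8 : φ (τ (C.pos x)) ∈ segment ℝ (φ (τ (C.pos y))) (φ (τ p)) :=
      mem_segment_phi_of hm
    rwa [hτspec _ hx, hτspec _ hy, hτspec _ hpℓ] at h8
  rcases same_side (τ (C.pos v1)) (τ (C.pos v2)) (τ (C.pos v3)) (τ p) with
    hm | hm | hm | hm | hm | hm
  · exact Or.inl (good_pair G C hIL hd1 hp1 he1 hnp1 hp2 hR2 hq2 hoff2 (conv v1 v2 hp1 hp2 hm))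
  · exact Or.inl
      (good_pair G C hIL hd2 hp2 he2 hnp2 hp1 hR1 hq1 hoff1 (conv v2 v1 hp2 hp1 hm)).symm
  · exact Or.inr (Or.inl
      (good_pair G C hIL hd1 hp1 he1 hnp1 hp3 hR3 hq3 hoff3 (conv v1 v3 hp1 hp3 hm)))
  · exact Or.inr (Or.inl
      (good_pair G C hIL hd3 hp3 he3 hnp3 hp1 hR1 hq1 hoff1 (conv v3 v1 hp3 hp1 hm)).symm)
  · exact Or.inr (Or.inr
      (good_pair G C hIL hd2 hp2 he2 hnp2 hp3 hR3 hq3 hoff3 (conv v2 v3 hp2 hp3 hm)))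
  · exact Or.inr (Or.inr
      (good_pair G C hIL hd3 hp3 he3 hnp3 hp2 hR2 hq2 hoff2 (conv v3 v2 hp3 hp2 hm)).symm)

/-- If a connected graph `G` that is not a path admits a `k`-line cover in `ℝ²`, then
`G` has fewer than `2k²` vertices of degree 1. -/
theorem stmt_10 {V : Type*} [Fintype V] (G : SimpleGraph V) (k : ℕ)
    (hconn : G.Connected)
    (hpath : ∀ n : ℕ, ¬ Nonempty (G ≃g SimpleGraph.pathGraph n))
    (h : Nonempty (LineCover G 2 k)) :
    {v : V | (G.neighborSet v).ncard = 1}.ncard < 2 * k ^ 2 := by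
  classical
  obtain ⟨C⟩ := h
  have hVne : Nonempty V := hconn.nonempty
  have hk : 1 ≤ k := by
    rcases Nat.eq_zero_or_pos k with rfl | hk
    · obtain ⟨i, _⟩ := C.coversV (Classical.arbitrary V)
      exact absurd i.2 (Nat.not_lt_zero _)
    · exact hk
  have main : ∀ v : V, (G.neighborSet v).ncard = 1 → ∃ ij : Fin k × Fin k,
      C.lines ij.1 ≠ C.lines ij.2 ∧ GoodData G C (C.lines ij.1) (C.lines ij.2) v := by
    intro v hv
    obtain ⟨i, j, hne, hg⟩ := exists_good G C hconn hpath hv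
    exact ⟨(i, j), hne, hg⟩
  haveI : Inhabited (Fin k) := ⟨⟨0, hk⟩⟩
  choose! F hF1 hF2 using main
  set T : V → Set (Fin 2 → ℝ) × Set (Fin 2 → ℝ) :=
    fun v => (C.lines (F v).1, C.lines (F v).2) with hT
  set s : Finset V := Finset.univ.filter (fun v => (G.neighborSet v).ncard = 1) with hs
  have hmem : ∀ v, v ∈ s ↔ (G.neighborSet v).ncard = 1 := by
    intro v; simp [hs]
  have hDs : {v : V | (G.neighborSet v).ncard = 1}.ncard = s.card := by
    rw [Set.ncard_eq_toFinset_card']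
    congr 1
    ext v
    simp [hs]
  have hfib : ∀ b ∈ s.image T, (s.filter (fun x => T x = b)).card ≤ 2 := by
    intro b _
    by_contra hgt
    push_neg at hgt
    obtain ⟨x, y, z, hx, hy, hz, hxy, hxz, hyz⟩ := Finset.two_lt_card_iff.mp hgt
    rw [Finset.mem_filter] at hx hy hz
    have hxD := (hmem x).mp hx.1
    have hyD := (hmem y).mp hy.1
    have hzD := (hmem z).mp hz.1
    have hgx := hF2 x hxD
    have hgy := hF2 y hyD
    have hgz := hF2 z hzD
    have hbx1 : C.lines (F x).1 = b.1 := congrArg Prod.fst hx.2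
    have hbx2 : C.lines (F x).2 = b.2 := congrArg Prod.snd hx.2
    have hby1 : C.lines (F y).1 = b.1 := congrArg Prod.fst hy.2
    have hby2 : C.lines (F y).2 = b.2 := congrArg Prod.snd hy.2
    have hbz1 : C.lines (F z).1 = b.1 := congrArg Prod.fst hz.2
    have hbz2 : C.lines (F z).2 = b.2 := congrArg Prod.snd hz.2
    rw [hbx1, hbx2] at hgx
    rw [hby1, hby2] at hgy
    rw [hbz1, hbz2] at hgz
    have hIL : IsLine b.1 := hbx1 ▸ C.isLine (F x).1
    have hIL' : IsLine b.2 := hbx2 ▸ C.isLine (F x).2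
    have hbne : b.1 ≠ b.2 := by
      rw [← hbx1, ← hbx2]
      exact hF1 x hxD
    rcases good_three G C hIL hIL' hbne hgx hgy hgz with h | h | h
    · exact hxy h
    · exact hxz h
    · exact hyz h
  have hcard1 : s.card ≤ 2 * (s.image T).card := Finset.card_le_mul_card_image s 2 hfib
  set LS : Finset (Set (Fin 2 → ℝ)) := Finset.univ.image C.lines with hLS
  have himg : s.image T ⊆ LS.offDiag := by
    intro b hb
    obtain ⟨v, hv, rfl⟩ := Finset.mem_image.mp hb
    have hvD := (hmem v).mp hv
    refine Finset.mem_offDiag.mpr ⟨?_, ?_, ?_⟩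
    · exact Finset.mem_image.mpr ⟨(F v).1, Finset.mem_univ _, rfl⟩
    · exact Finset.mem_image.mpr ⟨(F v).2, Finset.mem_univ _, rfl⟩
    · exact hF1 v hvD
  have hcard2 : (s.image T).card ≤ LS.card * LS.card - LS.card := by
    calc (s.image T).card ≤ LS.offDiag.card := Finset.card_le_card himg
    _ = LS.card * LS.card - LS.card := by exact Finset.offDiag_card LS
  have hLSk : LS.card ≤ k := by
    calc LS.card ≤ Finset.univ.card := Finset.card_image_le
    _ = k := by simp
  set m := LS.card with hm
  have hmm : m * m - m = m * (m - 1) := by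
    rcases m with _ | t
    · simp
    · have hexp : (t + 1) * (t + 1) = (t + 1) * t + (t + 1) := by ring
      rw [hexp, Nat.add_sub_cancel, Nat.succ_sub_one]
  have hstep1 : m * (m - 1) ≤ k * (k - 1) :=
    Nat.mul_le_mul hLSk (Nat.sub_le_sub_right hLSk 1)
  have hstep2 : k * (k - 1) < k * k :=
    mul_lt_mul_of_pos_left (Nat.sub_lt hk Nat.one_pos) hk
  calc {v : V | (G.neighborSet v).ncard = 1}.ncard = s.card := hDs
    _ ≤ 2 * (s.image T).card := hcard1
    _ ≤ 2 * (m * m - m) := Nat.mul_le_mul_left 2 hcard2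
    _ = 2 * (m * (m - 1)) := by rw [hmm]
    _ ≤ 2 * (k * (k - 1)) := Nat.mul_le_mul_left 2 hstep1
    _ < 2 * (k * k) := mul_lt_mul_of_pos_left hstep2 (by norm_num)
    _ = 2 * k ^ 2 := by ring
end

section
/- For every graph G, the weak affine cover number π¹_3(G) equals the linear vertex arboricity of G: the minimum number of parts in a partition of V(G) into sets each inducing a linear forest. -/
/-- A weak `k`-line cover of `G` in `ℝ³`: a crossing-free straight-line drawing of `G`
whose vertices (but not necessarily edges) lie on `k` lines. -/
structure WeakLineCover {V : Type*} (G : SimpleGraph V) (k : ℕ) where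
  pos : V → (Fin 3 → ℝ)
  inj : Function.Injective pos
  lines : Fin k → Set (Fin 3 → ℝ)
  isLine : ∀ i, IsLine (lines i)
  coversV : ∀ v, ∃ i, pos v ∈ lines i
  noCross : ∀ ⦃u v a b⦄, G.Adj u v → G.Adj a b → ({u, v} : Set V) ≠ {a, b} →
    ∀ x ∈ segment ℝ (pos u) (pos v) ∩ segment ℝ (pos a) (pos b),
      ∃ w, (w = u ∨ w = v) ∧ (w = a ∨ w = b) ∧ x = pos w

/-- A weak `k`-plane cover of `G` in `ℝ³`: a crossing-free straight-line drawing of `G`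
whose vertices (but not necessarily edges) lie on `k` planes. -/
structure WeakPlaneCover {V : Type*} (G : SimpleGraph V) (k : ℕ) where
  pos : V → (Fin 3 → ℝ)
  inj : Function.Injective pos
  planes : Fin k → Set (Fin 3 → ℝ)
  isPlane : ∀ i, IsPlane (planes i)
  coversV : ∀ v, ∃ i, pos v ∈ planes i
  noCross : ∀ ⦃u v a b⦄, G.Adj u v → G.Adj a b → ({u, v} : Set V) ≠ {a, b} →
    ∀ x ∈ segment ℝ (pos u) (pos v) ∩ segment ℝ (pos a) (pos b),
      ∃ w, (w = u ∨ w = v) ∧ (w = a ∨ w = b) ∧ x = pos w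

/-- The weak affine cover number `π¹_3(G)`. -/
noncomputable def pi13 {V : Type*} (G : SimpleGraph V) : ℕ :=
  sInf {k | Nonempty (WeakLineCover G k)}

/-- The weak affine cover number `π²_3(G)`. -/
noncomputable def pi23 {V : Type*} (G : SimpleGraph V) : ℕ :=
  sInf {k | Nonempty (WeakPlaneCover G k)}

/-- A linear forest: a graph whose connected components are paths, equivalently an
acyclic graph of maximum degree at most 2. -/
def IsLinearForest {W : Type*} (H : SimpleGraph W) : Prop :=
  H.IsAcyclic ∧ ∀ v, (H.neighborSet v).ncard ≤ 2

/-- The linear vertex arboricity `lva(G)`: the minimum number of parts in a partition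
of `V(G)` into sets each inducing a linear forest. -/
noncomputable def lva {V : Type*} (G : SimpleGraph V) : ℕ :=
  sInf {r | ∃ f : V → Fin r, ∀ i, IsLinearForest (G.induce (f ⁻¹' {i}))}


set_option linter.unusedSectionVars false
set_option maxHeartbeats 1000000

noncomputable section LVAAuxSec
namespace LVAAux
open SimpleGraph

abbrev F3 := Fin 3 → ℝ

/-- 3x3 determinant of three vectors. -/
def d3 (u v w : F3) : ℝ :=
  u 0 * (v 1 * w 2 - v 2 * w 1) - u 1 * (v 0 * w 2 - v 2 * w 0) + u 2 * (v 0 * w 1 - v 1 * w 0)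

def cpa (u v : F3) : ℝ := u 1 * v 2 - u 2 * v 1
def cpb (u v : F3) : ℝ := u 2 * v 0 - u 0 * v 2
def cpc (u v : F3) : ℝ := u 0 * v 1 - u 1 * v 0

/-- collinearity of three points -/
def CL (x y z : F3) : Prop :=
  cpa (y - x) (z - x) = 0 ∧ cpb (y - x) (z - x) = 0 ∧ cpc (y - x) (z - x) = 0

/-- coplanarity of four points -/
def CPL (w x y z : F3) : Prop := d3 (x - w) (y - w) (z - w) = 0

lemma sub_app (u v : F3) (j : Fin 3) : (u - v) j = u j - v j := rfl
lemma add_app (u v : F3) (j : Fin 3) : (u + v) j = u j + v j := rfl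
lemma smul_app (a : ℝ) (u : F3) (j : Fin 3) : (a • u) j = a * u j := rfl

lemma cL_comm {x y z : F3} : CL x y z ↔ CL y x z := by
  unfold CL cpa cpb cpc
  simp only [sub_app]
  constructor <;> rintro ⟨h1, h2, h3⟩ <;>
    exact ⟨by linear_combination -h1, by linear_combination -h2, by linear_combination -h3⟩

lemma cL_rot {x y z : F3} : CL x y z ↔ CL y z x := by
  unfold CL cpa cpb cpc
  simp only [sub_app]
  constructor <;> rintro ⟨h1, h2, h3⟩ <;>
    exact ⟨by linear_combination h1, by linear_combination h2, by linear_combination h3⟩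

lemma cPL_comm1 {w x y z : F3} : CPL w x y z ↔ CPL x w y z := by
  unfold CPL d3; simp only [sub_app]
  constructor <;> intro h <;> linear_combination -h

lemma cPL_comm2 {w x y z : F3} : CPL w x y z ↔ CPL w y x z := by
  unfold CPL d3; simp only [sub_app]
  constructor <;> intro h <;> linear_combination -h

lemma cPL_comm3 {w x y z : F3} : CPL w x y z ↔ CPL w x z y := by
  unfold CPL d3; simp only [sub_app]
  constructor <;> intro h <;> linear_combination -h

lemma seg_param {A B x : F3} (h : x ∈ segment ℝ A B) :
    ∃ θ : ℝ, 0 ≤ θ ∧ θ ≤ 1 ∧ x = A + θ • (B - A) := by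
  rw [segment_eq_image'] at h
  obtain ⟨θ, hθ, rfl⟩ := h
  exact ⟨θ, hθ.1, hθ.2, rfl⟩

lemma seg_mem {A B : F3} {θ : ℝ} (h0 : 0 ≤ θ) (h1 : θ ≤ 1) :
    A + θ • (B - A) ∈ segment ℝ A B := by
  rw [segment_eq_image']
  exact ⟨θ, ⟨h0, h1⟩, rfl⟩

/-- Two segments with non-coplanar endpoints are disjoint. -/
lemma seg_disjoint_of_not_cPL {A B C D x : F3} (hx1 : x ∈ segment ℝ A B)
    (hx2 : x ∈ segment ℝ C D) (h : ¬ CPL A B C D) : False := by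
  obtain ⟨s, _, _, hs⟩ := seg_param hx1
  obtain ⟨t, _, _, ht⟩ := seg_param hx2
  apply h
  have E : ∀ j : Fin 3, A j + s * (B j - A j) = C j + t * (D j - C j) := by
    intro j
    have := congrFun (hs.symm.trans ht) j
    simpa [add_app, smul_app, sub_app] using this
  unfold CPL
  rcases eq_or_ne t 1 with rfl | htne
  · -- D - A = s • (B - A)
    have hw : ∀ j : Fin 3, D j - A j = s * (B j - A j) := by
      intro j; have := E j; linarith
    unfold d3
    simp only [sub_app]
    rw [hw 0, hw 1, hw 2]; ring
  · have hvv : (1 - t) • (C - A) = s • (B - A) - t • (D - A) := by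
      funext j
      simp only [smul_app, sub_app]
      have := E j; nlinarith [E j]
    have e1 : (1 - t) * d3 (B - A) (C - A) (D - A) = d3 (B - A) ((1 - t) • (C - A)) (D - A) := by
      unfold d3; simp only [smul_app]; ring
    have e2 : d3 (B - A) (s • (B - A) - t • (D - A)) (D - A) = 0 := by
      unfold d3; simp only [sub_app, smul_app]; ring
    rw [hvv, e2] at e1
    exact (mul_eq_zero.mp e1).resolve_left (sub_ne_zero.mpr (Ne.symm htne))

/-- Segments from a common endpoint, other endpoints not collinear with it, meet only there. -/
lemma seg_shared_endpoint {P A B x : F3} (hx1 : x ∈ segment ℝ P A)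
    (hx2 : x ∈ segment ℝ P B) (h : ¬ CL P A B) : x = P := by
  obtain ⟨s, _, _, hs⟩ := seg_param hx1
  obtain ⟨t, _, _, ht⟩ := seg_param hx2
  have hsv : ∀ j : Fin 3, s * (A - P) j = t * (B - P) j := by
    intro j
    have := congrFun (hs.symm.trans ht) j
    simp only [add_app, smul_app] at this
    linarith
  rcases eq_or_ne s 0 with rfl | hsne
  · rw [hs]; simp
  · exfalso
    apply h
    have k1 : s * cpa (A - P) (B - P) = 0 := by
      unfold cpa; linear_combination (B - P) 2 * hsv 1 - (B - P) 1 * hsv 2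
    have k2 : s * cpb (A - P) (B - P) = 0 := by
      unfold cpb; linear_combination (B - P) 0 * hsv 2 - (B - P) 2 * hsv 0
    have k3 : s * cpc (A - P) (B - P) = 0 := by
      unfold cpc; linear_combination (B - P) 1 * hsv 0 - (B - P) 0 * hsv 1
    exact ⟨(mul_eq_zero.mp k1).resolve_left hsne, (mul_eq_zero.mp k2).resolve_left hsne,
      (mul_eq_zero.mp k3).resolve_left hsne⟩

/-- membership in a segment along a parameterized line -/
lemma seg_line_mem {p d : F3} {a b θ : ℝ} (h1 : min a b ≤ θ) (h2 : θ ≤ max a b) :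
    p + θ • d ∈ segment ℝ (p + a • d) (p + b • d) := by
  rcases eq_or_ne a b with rfl | hne0
  · simp only [min_self, max_self] at h1 h2
    have : θ = a := le_antisymm h2 h1
    subst this; exact left_mem_segment _ _ _
  rcases lt_or_gt_of_ne hne0 with hab' | hab'
  · rw [min_eq_left hab'.le] at h1; rw [max_eq_right hab'.le] at h2
    have hne : b - a ≠ 0 := by linarith
    have key : p + θ • d = (p + a • d) + ((θ - a)/(b - a)) • ((p + b • d) - (p + a • d)) := by
      funext j
      simp only [add_app, smul_app, sub_app]
      field_simp
      ring
    rw [key]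
    exact seg_mem (div_nonneg (by linarith) (by linarith))
      (by rw [div_le_one (by linarith)]; linarith)
  · rw [min_eq_right hab'.le] at h1; rw [max_eq_left hab'.le] at h2
    rw [segment_symm]
    have hne : a - b ≠ 0 := by linarith
    have key : p + θ • d = (p + b • d) + ((θ - b)/(a - b)) • ((p + a • d) - (p + b • d)) := by
      funext j
      simp only [add_app, smul_app, sub_app]
      field_simp
      ring
    rw [key]
    exact seg_mem (div_nonneg (by linarith) (by linarith))
      (by rw [div_le_one (by linarith)]; linarith)

lemma seg_line_param {p d : F3} {a b : ℝ} {x : F3}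
    (h : x ∈ segment ℝ (p + a • d) (p + b • d)) :
    ∃ θ, min a b ≤ θ ∧ θ ≤ max a b ∧ x = p + θ • d := by
  obtain ⟨lam, h0, h1, hx⟩ := seg_param h
  refine ⟨a + lam * (b - a), ?_, ?_, ?_⟩
  · rcases le_total a b with hab | hab
    · rw [min_eq_left hab]; nlinarith
    · rw [min_eq_right hab]; nlinarith
  · rcases le_total a b with hab | hab
    · rw [max_eq_right hab]; nlinarith
    · rw [max_eq_left hab]; nlinarith
  · rw [hx]; funext j; simp only [add_app, smul_app, sub_app]; ring

lemma funext3 {u v : F3} (h0 : u 0 = v 0) (h1 : u 1 = v 1) (h2 : u 2 = v 2) : u = v := by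
  funext j
  fin_cases j
  · exact h0
  · exact h1
  · exact h2

lemma vec_ne_zero {v : F3} (h : v ≠ 0) : v 0 ≠ 0 ∨ v 1 ≠ 0 ∨ v 2 ≠ 0 := by
  by_contra hc
  push_neg at hc
  exact h (funext3 hc.1 hc.2.1 hc.2.2)

lemma exists_par {u v : F3} (h1 : cpa u v = 0) (h2 : cpb u v = 0) (h3 : cpc u v = 0)
    (hv : v ≠ 0) : ∃ a : ℝ, u = a • v := by
  unfold cpa at h1; unfold cpb at h2; unfold cpc at h3
  rcases vec_ne_zero hv with h | h | h
  · refine ⟨u 0 / v 0, funext3 ?_ ?_ ?_⟩ <;> simp only [smul_app] <;> field_simp <;> linarith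
  · refine ⟨u 1 / v 1, funext3 ?_ ?_ ?_⟩ <;> simp only [smul_app] <;> field_simp <;> linarith
  · refine ⟨u 2 / v 2, funext3 ?_ ?_ ?_⟩ <;> simp only [smul_app] <;> field_simp <;> linarith

lemma d3_expand (u v w : F3) : d3 u v w = cpa u v * w 0 + cpb u v * w 1 + cpc u v * w 2 := by
  unfold d3 cpa cpb cpc; ring

lemma exists_span {u v w : F3} (h : d3 u v w = 0)
    (hc : ¬(cpa u v = 0 ∧ cpb u v = 0 ∧ cpc u v = 0)) : ∃ α β : ℝ, w = α • u + β • v := by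
  rw [d3_expand] at h
  have hnz : cpa u v ≠ 0 ∨ cpb u v ≠ 0 ∨ cpc u v ≠ 0 := by tauto
  unfold cpa cpb cpc at *
  rcases hnz with hcn | hcn | hcn
  · refine ⟨(w 1 * v 2 - w 2 * v 1) / (u 1 * v 2 - u 2 * v 1),
      (u 1 * w 2 - u 2 * w 1) / (u 1 * v 2 - u 2 * v 1), funext3 ?_ ?_ ?_⟩ <;>
      simp only [add_app, smul_app] <;> rw [div_mul_eq_mul_div, div_mul_eq_mul_div, ← add_div, eq_div_iff hcn]
    · linear_combination h
    · ring
    · ring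
  · refine ⟨(w 2 * v 0 - w 0 * v 2) / (u 2 * v 0 - u 0 * v 2),
      (u 2 * w 0 - u 0 * w 2) / (u 2 * v 0 - u 0 * v 2), funext3 ?_ ?_ ?_⟩ <;>
      simp only [add_app, smul_app] <;> rw [div_mul_eq_mul_div, div_mul_eq_mul_div, ← add_div, eq_div_iff hcn]
    · ring
    · linear_combination h
    · ring
  · refine ⟨(w 0 * v 1 - w 1 * v 0) / (u 0 * v 1 - u 1 * v 0),
      (u 0 * w 1 - u 1 * w 0) / (u 0 * v 1 - u 1 * v 0), funext3 ?_ ?_ ?_⟩ <;>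
      simp only [add_app, smul_app] <;> rw [div_mul_eq_mul_div, div_mul_eq_mul_div, ← add_div, eq_div_iff hcn]
    · ring
    · ring
    · linear_combination h

lemma span2 (u v : F3) (a1 b1 a2 b2 a3 b3 : ℝ) :
    d3 (a1•u + b1•v) (a2•u + b2•v) (a3•u + b3•v) = 0 := by
  unfold d3; simp only [add_app, smul_app]; ring

lemma d3_span {u v A B C : F3} (hA : ∃ a b : ℝ, A = a•u + b•v)
    (hB : ∃ a b : ℝ, B = a•u + b•v) (hC : ∃ a b : ℝ, C = a•u + b•v) : d3 A B C = 0 := by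
  obtain ⟨a1, b1, rfl⟩ := hA
  obtain ⟨a2, b2, rfl⟩ := hB
  obtain ⟨a3, b3, rfl⟩ := hC
  exact span2 u v a1 b1 a2 b2 a3 b3


variable {W : Type*} [Fintype W] [DecidableEq W]

/-- restriction of a graph to a finite vertex set -/
def restrict (H : SimpleGraph W) (s : Finset W) : SimpleGraph W where
  Adj a b := H.Adj a b ∧ a ∈ s ∧ b ∈ s
  symm := ⟨by rintro a b ⟨h, ha, hb⟩; exact ⟨h.symm, hb, ha⟩⟩
  loopless := ⟨fun a h => H.loopless.irrefl a h.1⟩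

lemma restrict_le (H : SimpleGraph W) (s : Finset W) : restrict H s ≤ H := fun _ _ h => h.1

lemma restrict_acyclic (H : SimpleGraph W) (s : Finset W) (hac : H.IsAcyclic) :
    (restrict H s).IsAcyclic := by
  intro v c hc
  exact hac (c.mapLe (restrict_le H s)) ((Walk.mapLe_isCycle _).mpr hc)

/-- every nonempty finite acyclic graph whose edges live in `s` has a vertex in `s`
of degree at most one -/
lemma exists_leaf (K : SimpleGraph W) (hac : K.IsAcyclic) (s : Set W)
    (hs : ∀ a b, K.Adj a b → a ∈ s) (hne : s.Nonempty) :
    ∃ v ∈ s, (K.neighborSet v).ncard ≤ 1 := by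
  by_contra hcon
  push_neg at hcon
  obtain ⟨v0, hv0⟩ := hne
  -- v0 has a neighbor
  have hv0' : 1 < (K.neighborSet v0).ncard := hcon v0 hv0
  obtain ⟨w0, hw0⟩ : (K.neighborSet v0).Nonempty := by
    rcases Set.eq_empty_or_nonempty (K.neighborSet v0) with h | h
    · rw [h] at hv0'; simp at hv0'
    · exact h
  -- the set of path lengths
  set L : Set ℕ := {n | ∃ (u v : W) (p : K.Walk u v), p.IsPath ∧ p.length = n} with hL
  have hLne : 1 ∈ L := by
    refine ⟨v0, w0, Walk.cons (show K.Adj v0 w0 from hw0) Walk.nil, ?_, rfl⟩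
    rw [Walk.cons_isPath_iff]
    exact ⟨Walk.IsPath.nil, by simp [(K.ne_of_adj hw0)]⟩
  have hLbdd : BddAbove L := by
    refine ⟨Fintype.card W, fun n hn => ?_⟩
    obtain ⟨u, v, p, hp, rfl⟩ := hn
    exact hp.length_lt.le
  set N := sSup L with hN
  have hNmem : N ∈ L := Nat.sSup_mem ⟨1, hLne⟩ hLbdd
  have hN1 : 1 ≤ N := le_csSup hLbdd hLne
  obtain ⟨u, v, p, hp, hplen⟩ := hNmem
  -- p is not nil
  cases p with
  | nil => simp at hplen; omega
  | cons had q =>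
    rename_i b
    have hu : u ∈ s := hs _ _ had
    -- all neighbors of u lie in the support
    have hsupp : ∀ x, K.Adj u x → x ∈ (Walk.cons had q).support := by
      intro x hx
      by_contra hxs
      have : (Walk.cons hx.symm (Walk.cons had q)).IsPath := by
        rw [Walk.cons_isPath_iff]
        exact ⟨hp, hxs⟩
      have : N + 1 ∈ L := ⟨x, v, _, this, by simp [hplen]⟩
      have := le_csSup hLbdd this
      omega
    -- at most one neighbor of u is joined by an edge of p
    have hone : ∀ x, K.Adj u x → s(u, x) ∈ (Walk.cons had q).edges → x = b := by
      intro x hx hxe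
      rw [Walk.edges_cons] at hxe
      rcases List.mem_cons.mp hxe with h | h
      · rcases Sym2.eq_iff.mp h with ⟨_, h2⟩ | ⟨h1, h2⟩
        · exact h2
        · exact absurd h2.symm (K.ne_of_adj hx)
      · exact absurd (Walk.fst_mem_support_of_mem_edges q h)
          ((Walk.cons_isPath_iff _ _).mp hp).2
    -- two distinct neighbors of u
    obtain ⟨x, y, hxmem, hymem, hxy⟩ := (Set.one_lt_ncard_iff (Set.toFinite _)).mp (hcon u hu)
    -- pick one whose edge to u is not on p
    obtain ⟨z, hz, hze⟩ : ∃ z, K.Adj u z ∧ s(u, z) ∉ (Walk.cons had q).edges := by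
      by_cases hx' : s(u, x) ∈ (Walk.cons had q).edges
      · refine ⟨y, hymem, fun hy' => ?_⟩
        exact hxy ((hone x hxmem hx').trans (hone y hymem hy').symm)
      · exact ⟨x, hxmem, hx'⟩

    have hzsupp := hsupp z hz
    set q' := (Walk.cons had q).takeUntil z hzsupp with hq'
    have hq'path : q'.IsPath := hp.takeUntil hzsupp
    have hcyc : (Walk.cons hz q'.reverse).IsCycle := by
      rw [Walk.cons_isCycle_iff]
      refine ⟨hq'path.reverse, fun hmem => ?_⟩
      rw [Walk.edges_reverse, List.mem_reverse] at hmem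
      exact hze (Walk.edges_takeUntil_subset _ hzsupp hmem)
    exact hac _ hcyc

/-- enumeration of a linear forest with adjacent vertices consecutive -/
lemma lf_enum (H : SimpleGraph W) (hac : H.IsAcyclic)
    (hdeg : ∀ v, (H.neighborSet v).ncard ≤ 2) :
    ∃ g : W → ℕ, Function.Injective g ∧
      ∀ a b, H.Adj a b → g a = g b + 1 ∨ g b = g a + 1 := by
  have claim : ∀ (n : ℕ) (s : Finset W), s.card = n →
      ∃ g : W → ℕ, Set.InjOn g ↑s ∧
        ∀ a ∈ s, ∀ b ∈ s, H.Adj a b → g a = g b + 1 ∨ g b = g a + 1 := by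
    intro n
    induction n using Nat.strong_induction_on with
    | _ n ih =>
      intro s hcard
      rcases Finset.eq_empty_or_nonempty s with rfl | hsne
      · exact ⟨fun _ => 0, by simp, by simp⟩
      -- find a leaf of the restricted graph
      have hKac := restrict_acyclic H s hac
      obtain ⟨v, hvs, hvdeg⟩ := exists_leaf (restrict H s) hKac ↑s
        (fun a b h => h.2.1) (by exact_mod_cast hsne)
      set s' := s.erase v with hs'
      have hvcard : s'.card < n := by
        rw [hs', Finset.card_erase_of_mem hvs]
        have := Finset.card_pos.mpr hsne
        omega
      obtain ⟨g', hg'inj, hg'adj⟩ := ih s'.card hvcard s' rfl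
      have hs'sub : ∀ x, x ∈ s' → x ∈ s := fun x hx => Finset.mem_of_mem_erase hx
      have hins : ∀ x, x ∈ s → x ≠ v → x ∈ s' := fun x hx hne => Finset.mem_erase.mpr ⟨hne, hx⟩
      by_cases hB : ∃ w ∈ s', H.Adj v w
      · obtain ⟨w, hws', hvw⟩ := hB
        have hwv : w ≠ v := (Finset.mem_erase.mp hws').1
        -- uniqueness of the neighbor of v in s'
        have huniq : ∀ x, x ∈ s' → H.Adj v x → x = w := by
          intro x hx hvx
          by_contra hxw
          have h1 : x ∈ (restrict H s).neighborSet v := ⟨hvx, hvs, hs'sub x hx⟩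
          have h2 : w ∈ (restrict H s).neighborSet v := ⟨hvw, hvs, hs'sub w hws'⟩
          have hgt : 1 < ((restrict H s).neighborSet v).ncard :=
            (Set.one_lt_ncard_iff (Set.toFinite _)).mpr ⟨x, w, h1, h2, hxw⟩
          exact (not_le.mpr hgt) hvdeg
        by_cases hR : ∃ x ∈ s', H.Adj w x ∧ g' x = g' w + 1
        · -- insert v to the left of w : v ↦ g' w, shift n ↦ if n < g' w then n else n+1
          have hLval : ¬ ∃ y ∈ s', H.Adj w y ∧ g' y + 1 = g' w := by
            rintro ⟨y, hys', hwy, hyv⟩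
            obtain ⟨x, hxs', hwx, hxv⟩ := hR
            have hxy : x ≠ y := fun h => by rw [h] at hxv; omega
            have hxne : x ≠ v := (Finset.mem_erase.mp hxs').1
            have hyne : y ≠ v := (Finset.mem_erase.mp hys').1
            have hgt : 2 < (H.neighborSet w).ncard :=
              (Set.two_lt_ncard_iff (Set.toFinite _)).mpr
                ⟨x, y, v, hwx, hwy, hvw.symm, hxy, hxne, hyne⟩
            have hle := hdeg w
            omega
          refine ⟨fun x => if x = v then g' w else (if g' x < g' w then g' x else g' x + 1),
            ?_, ?_⟩
          · intro x hx y hy hxy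
            simp only at hxy
            by_cases hxv : x = v <;> by_cases hyv : y = v
            · rw [hxv, hyv]
            · exfalso; rw [if_pos hxv, if_neg hyv] at hxy
              split at hxy <;> omega
            · exfalso; rw [if_neg hxv, if_pos hyv] at hxy
              split at hxy <;> omega
            · rw [if_neg hxv, if_neg hyv] at hxy
              apply hg'inj (by exact_mod_cast hins x hx hxv) (by exact_mod_cast hins y hy hyv)
              split at hxy <;> split at hxy <;> omega
          · intro a ha b hb hab
            simp only
            by_cases hav : a = v <;> by_cases hbv : b = v
            · exact absurd (hav.trans hbv.symm) (H.ne_of_adj hab)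
            · have hbw : b = w := by
                apply huniq b (hins b hb hbv); rw [← hav]; exact hab
              rw [if_pos hav, if_neg hbv, hbw, if_neg (lt_irrefl (g' w))]
              right; rfl
            · have haw : a = w := by
                apply huniq a (hins a ha hav); rw [← hbv]; exact hab.symm
              rw [if_neg hav, if_pos hbv, haw, if_neg (lt_irrefl (g' w))]
              left; rfl
            · have has' := hins a ha hav
              have hbs' := hins b hb hbv
              rw [if_neg hav, if_neg hbv]
              rcases hg'adj a has' b hbs' hab with h | h
              · by_cases hbc : g' b + 1 = g' w
                · exfalso
                  have haw : a = w :=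
                    hg'inj (by exact_mod_cast has') (by exact_mod_cast hws') (by omega)
                  refine hLval ⟨b, hbs', ?_, hbc⟩
                  rw [← haw]; exact hab
                · split <;> split <;> omega
              · by_cases hac' : g' a + 1 = g' w
                · exfalso
                  have hbw : b = w :=
                    hg'inj (by exact_mod_cast hbs') (by exact_mod_cast hws') (by omega)
                  refine hLval ⟨a, has', ?_, hac'⟩
                  rw [← hbw]; exact hab.symm
                · split <;> split <;> omega
        · -- insert v to the right of w : v ↦ g' w + 1
          refine ⟨fun x => if x = v then g' w + 1 else (if g' x ≤ g' w then g' x else g' x + 1),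
            ?_, ?_⟩
          · intro x hx y hy hxy
            simp only at hxy
            by_cases hxv : x = v <;> by_cases hyv : y = v
            · rw [hxv, hyv]
            · exfalso; rw [if_pos hxv, if_neg hyv] at hxy
              have hyw : y = w := by
                apply hg'inj (by exact_mod_cast hins y hy hyv) (by exact_mod_cast hws')
                split at hxy <;> omega
              rw [hyw] at hxy
              split at hxy <;> omega
            · exfalso; rw [if_neg hxv, if_pos hyv] at hxy
              have hxw : x = w := by
                apply hg'inj (by exact_mod_cast hins x hx hxv) (by exact_mod_cast hws')
                split at hxy <;> omega
              rw [hxw] at hxy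
              split at hxy <;> omega
            · rw [if_neg hxv, if_neg hyv] at hxy
              apply hg'inj (by exact_mod_cast hins x hx hxv) (by exact_mod_cast hins y hy hyv)
              split at hxy <;> split at hxy <;> omega
          · intro a ha b hb hab
            simp only
            by_cases hav : a = v <;> by_cases hbv : b = v
            · exact absurd (hav.trans hbv.symm) (H.ne_of_adj hab)
            · have hbw : b = w := by
                apply huniq b (hins b hb hbv); rw [← hav]; exact hab
              rw [if_pos hav, if_neg hbv, hbw, if_pos (le_refl (g' w))]
              left; rfl
            · have haw : a = w := by
                apply huniq a (hins a ha hav); rw [← hbv]; exact hab.symm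
              rw [if_neg hav, if_pos hbv, haw, if_pos (le_refl (g' w))]
              right; rfl
            · have has' := hins a ha hav
              have hbs' := hins b hb hbv
              rw [if_neg hav, if_neg hbv]
              rcases hg'adj a has' b hbs' hab with h | h
              · by_cases hbc : g' b = g' w
                · exfalso
                  have hbw : b = w :=
                    hg'inj (by exact_mod_cast hbs') (by exact_mod_cast hws') hbc
                  refine hR ⟨a, has', ?_, by omega⟩
                  rw [← hbw]; exact hab.symm
                · split <;> split <;> omega
              · by_cases hac' : g' a = g' w
                · exfalso
                  have haw : a = w :=
                    hg'inj (by exact_mod_cast has') (by exact_mod_cast hws') hac'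
                  refine hR ⟨b, hbs', ?_, by omega⟩
                  rw [← haw]; exact hab
                · split <;> split <;> omega
      · -- v has no neighbor in s'
        push_neg at hB
        refine ⟨fun x => if x = v then s'.sup g' + 1 else g' x, ?_, ?_⟩
        · intro x hx y hy hxy
          simp only at hxy
          by_cases hxv : x = v <;> by_cases hyv : y = v
          · rw [hxv, hyv]
          · exfalso; rw [if_pos hxv, if_neg hyv] at hxy
            have : g' y ≤ s'.sup g' := Finset.le_sup (hins y hy hyv)
            omega
          · exfalso; rw [if_neg hxv, if_pos hyv] at hxy
            have : g' x ≤ s'.sup g' := Finset.le_sup (hins x hx hxv)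
            omega
          · rw [if_neg hxv, if_neg hyv] at hxy
            exact hg'inj (by exact_mod_cast hins x hx hxv) (by exact_mod_cast hins y hy hyv) hxy
        · intro a ha b hb hab
          simp only
          by_cases hav : a = v <;> by_cases hbv : b = v
          · exact absurd (hav.trans hbv.symm) (H.ne_of_adj hab)
          · exact absurd (by rw [← hav]; exact hab) (hB b (hins b hb hbv))
          · exact absurd (by rw [← hbv]; exact hab.symm) (hB a (hins a ha hav))
          · rw [if_neg hav, if_neg hbv]
            exact hg'adj a (hins a ha hav) b (hins b hb hbv) hab
  obtain ⟨g, hginj, hgadj⟩ := claim (Finset.univ.card) Finset.univ rfl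
  exact ⟨g, fun x y h => hginj (by simp) (by simp) h,
    fun a b hab => hgadj a (by simp) b (by simp) hab⟩


section DirA

variable {V : Type*} [Fintype V] {G : SimpleGraph V}

lemma cross_core {k : ℕ} (C : WeakLineCover G k) {u a b : V} (hua : G.Adj u a)
    (hub : G.Adj u b) (hab : a ≠ b) {p d : F3} (hd : d ≠ 0) {tu ta tb : ℝ}
    (hu : C.pos u = p + tu • d) (ha : C.pos a = p + ta • d) (hb : C.pos b = p + tb • d)
    (h1 : tu < ta) (h2 : ta < tb) : False := by
  set x : F3 := p + ((tu + ta)/2) • d with hx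
  have hx1 : x ∈ segment ℝ (C.pos u) (C.pos a) := by
    rw [hu, ha]
    apply seg_line_mem
    · rw [min_eq_left h1.le]; linarith
    · rw [max_eq_right h1.le]; linarith
  have hx2 : x ∈ segment ℝ (C.pos u) (C.pos b) := by
    rw [hu, hb]
    apply seg_line_mem
    · rw [min_eq_left (by linarith : tu ≤ tb)]; linarith
    · rw [max_eq_right (by linarith : tu ≤ tb)]; linarith
  have hset : ({u, a} : Set V) ≠ {u, b} := by
    intro hss
    have : a ∈ ({u, b} : Set V) := hss ▸ (by simp : a ∈ ({u, a} : Set V))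
    rcases this with h | h
    · exact hua.ne' h
    · exact hab h
  obtain ⟨w, hw1, hw2, hwx⟩ := C.noCross hua hub hset x ⟨hx1, hx2⟩
  have hwu : w = u := by
    rcases hw1 with rfl | rfl
    · rfl
    · rcases hw2 with h | h
      · exact h
      · exact absurd h hab
  rw [hwu, hu, hx] at hwx
  have : ((tu + ta)/2 - tu) • d = 0 := by
    have := add_left_cancel hwx
    rw [sub_smul, this, sub_self]
  rcases smul_eq_zero.mp this with h | h
  · have : tu = ta := by linarith
    exact absurd this (by linarith)
  · exact hd h

lemma cross_both_gt {k : ℕ} (C : WeakLineCover G k) {u a b : V} (hua : G.Adj u a)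
    (hub : G.Adj u b) (hab : a ≠ b) {p d : F3} (hd : d ≠ 0) {tu ta tb : ℝ}
    (hu : C.pos u = p + tu • d) (ha : C.pos a = p + ta • d) (hb : C.pos b = p + tb • d)
    (h1 : tu < ta) (h2 : tu < tb) : False := by
  have htab : ta ≠ tb := by
    intro h
    exact hab (C.inj (by rw [ha, hb, h]))
  rcases lt_or_gt_of_ne htab with h | h
  · exact cross_core C hua hub hab hd hu ha hb h1 h
  · exact cross_core C hub hua hab.symm hd hu hb ha h2 h

lemma cross_core' {k : ℕ} (C : WeakLineCover G k) {u a b : V} (hua : G.Adj u a)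
    (hub : G.Adj u b) (hab : a ≠ b) {p d : F3} (hd : d ≠ 0) {tu ta tb : ℝ}
    (hu : C.pos u = p + tu • d) (ha : C.pos a = p + ta • d) (hb : C.pos b = p + tb • d)
    (hside : (tu < ta ∧ tu < tb) ∨ (ta < tu ∧ tb < tu)) : False := by
  rcases hside with ⟨h1, h2⟩ | ⟨h1, h2⟩
  · exact cross_both_gt C hua hub hab hd hu ha hb h1 h2
  · have neg : ∀ (t : ℝ) (q : F3), q = p + t • d → q = p + (-t) • (-d) := by
      intro t q hq
      rw [hq, neg_smul, smul_neg, neg_neg]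
    exact cross_both_gt C hua hub hab (neg_ne_zero.mpr hd)
      (neg _ _ hu) (neg _ _ ha) (neg _ _ hb) (by linarith) (by linarith)

lemma dirA {k : ℕ} (C : WeakLineCover G k) :
    ∃ f : V → Fin k, ∀ i, IsLinearForest (G.induce (f ⁻¹' {i})) := by
  refine ⟨fun v => (C.coversV v).choose, fun i => ?_⟩
  set S : Set V := (fun v => (C.coversV v).choose) ⁻¹' {i} with hS
  obtain ⟨p, d, hd, hLeq⟩ := C.isLine i
  have hmem : ∀ v : ↥S, ∃ t : ℝ, C.pos ↑v = p + t • d := by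
    intro v
    have hv : (C.coversV (↑v : V)).choose = i := v.2
    have hsp := (C.coversV (↑v : V)).choose_spec
    rw [hv, hLeq] at hsp
    exact hsp
  choose τ hτ using hmem
  have hτinj : ∀ {x y : ↥S}, τ x = τ y → x = y := by
    intro x y h
    exact Subtype.ext (C.inj (by rw [hτ x, hτ y, h]))
  have hGadj : ∀ {x y : ↥S}, (G.induce S).Adj x y → G.Adj ↑x ↑y := fun h => h
  have key : ∀ (x a b : ↥S), (G.induce S).Adj x a → (G.induce S).Adj x b → a ≠ b →
      ((τ x < τ a ∧ τ x < τ b) ∨ (τ a < τ x ∧ τ b < τ x)) → False := by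
    intro x a b h1 h2 hab hside
    exact cross_core' C (hGadj h1) (hGadj h2)
      (fun h => hab (Subtype.ext h)) hd (hτ x) (hτ a) (hτ b) hside
  constructor
  · -- acyclic
    intro v0 c hcyc
    haveI : DecidableEq ↥S := Classical.decEq _
    cases harg : List.argmax τ c.support with
    | none => exact c.support_ne_nil (List.argmax_eq_none.mp harg)
    | some m =>
      have hmem' : m ∈ c.support := List.argmax_mem harg
      have hmax : ∀ x ∈ c.support, τ x ≤ τ m := fun x hx => List.le_of_mem_argmax hx harg
      have hcyc' := hcyc.rotate hmem'
      have hsupp' : ∀ x, x ∈ (c.rotate _ hmem').support → x ∈ c.support := by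
        intro x hx
        rw [SimpleGraph.Walk.mem_support_iff] at hx
        rcases hx with rfl | hx
        · exact hmem'
        · exact List.mem_of_mem_tail (((c.support_rotate _ hmem').mem_iff).mp hx)
      cases hw : c.rotate _ hmem' with
      | nil => rw [hw] at hcyc'; exact hcyc'.ne_nil rfl
      | cons h q =>
        rename_i b
        rw [hw] at hcyc'
        rw [SimpleGraph.Walk.cons_isCycle_iff] at hcyc'
        obtain ⟨hqp, hqe⟩ := hcyc'
        have hb_supp : b ∈ c.support := by
          apply hsupp'
          rw [hw, SimpleGraph.Walk.support_cons]
          exact List.mem_cons_of_mem _ q.start_mem_support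
        cases hw2 : q.reverse with
        | nil => exact h.ne rfl
        | cons h2 q2 =>
          rename_i w2
          have hw2b : w2 ≠ b := by
            intro h'
            have hmem2 : s(m, w2) ∈ q.reverse.edges := by
              rw [hw2]; exact List.mem_cons_self
            rw [SimpleGraph.Walk.edges_reverse, List.mem_reverse] at hmem2
            rw [h'] at hmem2
            exact hqe hmem2
          have hw2q : w2 ∈ q.support := by
            have : w2 ∈ q.reverse.support := by
              rw [hw2, SimpleGraph.Walk.support_cons]
              exact List.mem_cons_of_mem _ q2.start_mem_support
            rw [SimpleGraph.Walk.support_reverse, List.mem_reverse] at this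
            exact this
          have hw2_supp : w2 ∈ c.support := by
            apply hsupp'
            rw [hw, SimpleGraph.Walk.support_cons]
            exact List.mem_cons_of_mem _ hw2q
          have hbm : τ b < τ m :=
            lt_of_le_of_ne (hmax b hb_supp) (fun hh => h.ne' (hτinj hh))
          have hw2m : τ w2 < τ m :=
            lt_of_le_of_ne (hmax w2 hw2_supp) (fun hh => h2.ne' (hτinj hh))
          exact key m b w2 h h2 (Ne.symm hw2b) (Or.inr ⟨hbm, hw2m⟩)
  · -- degree at most 2
    intro v
    by_contra hdg
    push_neg at hdg
    obtain ⟨x, y, z, hx, hy, hz, hxy, hxz, hyz⟩ :=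
      (Set.two_lt_ncard_iff (Set.toFinite _)).mp hdg
    have hadjx : (G.induce S).Adj v x := hx
    have hadjy : (G.induce S).Adj v y := hy
    have hadjz : (G.induce S).Adj v z := hz
    have hnx : τ v ≠ τ x := fun h => hadjx.ne (hτinj h)
    have hny : τ v ≠ τ y := fun h => hadjy.ne (hτinj h)
    have hnz : τ v ≠ τ z := fun h => hadjz.ne (hτinj h)
    rcases lt_or_gt_of_ne hnx with hx' | hx' <;>
      rcases lt_or_gt_of_ne hny with hy' | hy' <;>
        rcases lt_or_gt_of_ne hnz with hz' | hz' <;>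
    first
      | exact key v x y hadjx hadjy hxy (Or.inl ⟨hx', hy'⟩)
      | exact key v x y hadjx hadjy hxy (Or.inr ⟨hx', hy'⟩)
      | exact key v x z hadjx hadjz hxz (Or.inl ⟨hx', hz'⟩)
      | exact key v x z hadjx hadjz hxz (Or.inr ⟨hx', hz'⟩)
      | exact key v y z hadjy hadjz hyz (Or.inl ⟨hy', hz'⟩)
      | exact key v y z hadjy hadjz hyz (Or.inr ⟨hy', hz'⟩)

end DirA

section DirB1

/-! ### lines and generic-position machinery -/

def Pt (c : ℝ) : F3 := ![0, 0, c]
def Dr (c : ℝ) : F3 := ![1, c, 0]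
def qp (c T : ℝ) : F3 := Pt c + T • Dr c

@[simp] lemma Pt_0 (c : ℝ) : Pt c 0 = 0 := rfl
@[simp] lemma Pt_1 (c : ℝ) : Pt c 1 = 0 := rfl
@[simp] lemma Pt_2 (c : ℝ) : Pt c 2 = c := rfl
@[simp] lemma Dr_0 (c : ℝ) : Dr c 0 = 1 := rfl
@[simp] lemma Dr_1 (c : ℝ) : Dr c 1 = c := rfl
@[simp] lemma Dr_2 (c : ℝ) : Dr c 2 = 0 := rfl

lemma Dr_ne_zero (c : ℝ) : Dr c ≠ 0 := by
  intro h
  have := congrFun h 0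
  simp [Dr] at this

@[simp] lemma qp_0 (c T : ℝ) : qp c T 0 = T := by simp [qp, add_app, smul_app]
@[simp] lemma qp_1 (c T : ℝ) : qp c T 1 = T * c := by simp [qp, add_app, smul_app]
@[simp] lemma qp_2 (c T : ℝ) : qp c T 2 = c := by simp [qp, add_app, smul_app]

lemma qp_sub (c T : ℝ) (P : F3) : qp c T - P = (Pt c - P) + T • Dr c := by
  unfold qp; abel

/-- root set of an affine function, trivial if degenerate -/
def RS (α β : ℝ) : Set ℝ := {T | β * T + α = 0 ∧ ¬(α = 0 ∧ β = 0)}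

lemma RS_finite (α β : ℝ) : (RS α β).Finite := by
  apply Set.Finite.subset (Set.finite_singleton (-α / β))
  rintro T ⟨h1, h2⟩
  rcases eq_or_ne β 0 with rfl | hβ
  · exact absurd ⟨by linarith, rfl⟩ h2
  · simp only [Set.mem_singleton_iff]
    field_simp
    linarith

lemma RS_not_mem {α β T : ℝ} (h : T ∉ RS α β) (hne : ¬(α = 0 ∧ β = 0)) : β * T + α ≠ 0 :=
  fun h0 => h ⟨h0, hne⟩

lemma cpa_affine (u w d : F3) (T : ℝ) : cpa u (w + T • d) = cpa u w + T * cpa u d := by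
  unfold cpa; simp only [add_app, smul_app]; ring
lemma cpb_affine (u w d : F3) (T : ℝ) : cpb u (w + T • d) = cpb u w + T * cpb u d := by
  unfold cpb; simp only [add_app, smul_app]; ring
lemma cpc_affine (u w d : F3) (T : ℝ) : cpc u (w + T • d) = cpc u w + T * cpc u d := by
  unfold cpc; simp only [add_app, smul_app]; ring

lemma d3_affine3 (u v w d : F3) (T : ℝ) : d3 u v (w + T • d) = d3 u v w + T * d3 u v d := by
  unfold d3; simp only [add_app, smul_app]; ring
lemma d3_affine1 (w d u v : F3) (T : ℝ) : d3 (w + T • d) u v = d3 w u v + T * d3 d u v := by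
  unfold d3; simp only [add_app, smul_app]; ring

lemma d3_131 (u v : F3) : d3 u v u = 0 := by unfold d3; ring
lemma d3_swap12 (u v w : F3) : d3 u v w = -d3 v u w := by unfold d3; ring
lemma d3_expand1 (u v w : F3) : d3 u v w = u 0 * cpa v w + u 1 * cpb v w + u 2 * cpc v w := by
  unfold d3 cpa cpb cpc; ring
lemma cpa_swap (u v : F3) : cpa u v = -cpa v u := by unfold cpa; ring
lemma cpb_swap (u v : F3) : cpb u v = -cpb v u := by unfold cpb; ring
lemma cpc_swap (u v : F3) : cpc u v = -cpc v u := by unfold cpc; ring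
lemma cpa_smul1 (a : ℝ) (u v : F3) : cpa (a • u) v = a * cpa u v := by
  unfold cpa; simp only [smul_app]; ring
lemma cpb_smul1 (a : ℝ) (u v : F3) : cpb (a • u) v = a * cpb u v := by
  unfold cpb; simp only [smul_app]; ring
lemma cpc_smul1 (a : ℝ) (u v : F3) : cpc (a • u) v = a * cpc u v := by
  unfold cpc; simp only [smul_app]; ring

def badK2 (X Y : F3) (ci : ℝ) : Set ℝ :=
  RS (cpa (Y - X) (Pt ci - X)) (cpa (Y - X) (Dr ci)) ∪
  RS (cpb (Y - X) (Pt ci - X)) (cpb (Y - X) (Dr ci)) ∪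
  RS (cpc (Y - X) (Pt ci - X)) (cpc (Y - X) (Dr ci))

def badK3 (X Y Z : F3) (ci : ℝ) : Set ℝ :=
  RS (d3 (Y - X) (Z - X) (Pt ci - X)) (d3 (Y - X) (Z - X) (Dr ci))

def badK5 (Y : F3) (ci cm : ℝ) : Set ℝ :=
  RS (d3 (Pt ci - Pt cm) (Y - Pt cm) (Dr cm)) (d3 (Dr ci) (Y - Pt cm) (Dr cm))

lemma badK2_finite (X Y : F3) (ci : ℝ) : (badK2 X Y ci).Finite :=
  ((RS_finite _ _).union (RS_finite _ _)).union (RS_finite _ _)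
lemma badK3_finite (X Y Z : F3) (ci : ℝ) : (badK3 X Y Z ci).Finite := RS_finite _ _
lemma badK5_finite (Y : F3) (ci cm : ℝ) : (badK5 Y ci cm).Finite := RS_finite _ _

/-- generic choice kills collinearity with the new point -/
lemma claim2_lem {X Y : F3} {ci T : ℝ} (hT : T ∉ badK2 X Y ci) (hXY : X ≠ Y)
    (hX : X 2 ≠ ci ∨ Y 2 ≠ ci) : ¬ CL X Y (qp ci T) := by
  rintro ⟨h1, h2, h3⟩
  rw [show qp ci T - X = (Pt ci - X) + T • Dr ci from qp_sub ci T X] at h1 h2 h3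
  rw [cpa_affine] at h1
  rw [cpb_affine] at h2
  rw [cpc_affine] at h3
  simp only [badK2, Set.mem_union, not_or] at hT
  obtain ⟨⟨hT1, hT2⟩, hT3⟩ := hT
  have hab1 : cpa (Y - X) (Pt ci - X) = 0 ∧ cpa (Y - X) (Dr ci) = 0 := by
    by_contra hq; exact (RS_not_mem hT1 hq) (by linarith)
  have hab2 : cpb (Y - X) (Pt ci - X) = 0 ∧ cpb (Y - X) (Dr ci) = 0 := by
    by_contra hq; exact (RS_not_mem hT2 hq) (by linarith)
  have hab3 : cpc (Y - X) (Pt ci - X) = 0 ∧ cpc (Y - X) (Dr ci) = 0 := by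
    by_contra hq; exact (RS_not_mem hT3 hq) (by linarith)
  obtain ⟨lam, hlam⟩ := exists_par hab1.2 hab2.2 hab3.2 (Dr_ne_zero ci)
  rcases eq_or_ne lam 0 with rfl | hlamne
  · rw [zero_smul] at hlam
    exact hXY (sub_eq_zero.mp hlam).symm
  · -- cp_j (Dr ci) (Pt ci - X) = 0 for all j
    have e1 : cpa (Pt ci - X) (Dr ci) = 0 := by
      have := hab1.1
      rw [hlam, cpa_smul1] at this
      have h' := (mul_eq_zero.mp this).resolve_left hlamne
      rw [cpa_swap] at h'
      linarith [cpa_swap (Pt ci - X) (Dr ci)]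
    have e2 : cpb (Pt ci - X) (Dr ci) = 0 := by
      have := hab2.1
      rw [hlam, cpb_smul1] at this
      have h' := (mul_eq_zero.mp this).resolve_left hlamne
      linarith [cpb_swap (Pt ci - X) (Dr ci)]
    have e3 : cpc (Pt ci - X) (Dr ci) = 0 := by
      have := hab3.1
      rw [hlam, cpc_smul1] at this
      have h' := (mul_eq_zero.mp this).resolve_left hlamne
      linarith [cpc_swap (Pt ci - X) (Dr ci)]
    obtain ⟨mu, hmu⟩ := exists_par e1 e2 e3 (Dr_ne_zero ci)
    have hX2 : X 2 = ci := by
      have := congrFun hmu 2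
      simp only [sub_app, smul_app] at this
      simp at this
      linarith
    have hY2 : Y 2 = ci := by
      have := congrFun hlam 2
      simp only [sub_app, smul_app] at this
      simp at this
      linarith
    rcases hX with h | h
    · exact h hX2
    · exact h hY2

/-- generic choice: coplanarity of the new point with three old ones forces
the line through the new point to be coplanar with each pair of the old ones -/
lemma claim3_lem {X Y Z : F3} {ci T : ℝ} (hT : T ∉ badK3 X Y Z ci) (hCL : ¬ CL X Y Z)
    (hcop : CPL X Y Z (qp ci T)) :
    d3 (X - Pt ci) (Y - Pt ci) (Dr ci) = 0 ∧ d3 (X - Pt ci) (Z - Pt ci) (Dr ci) = 0 ∧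
    d3 (Y - Pt ci) (Z - Pt ci) (Dr ci) = 0 := by
  unfold CPL at hcop
  rw [show qp ci T - X = (Pt ci - X) + T • Dr ci from qp_sub ci T X, d3_affine3] at hcop
  have hab : d3 (Y - X) (Z - X) (Pt ci - X) = 0 ∧ d3 (Y - X) (Z - X) (Dr ci) = 0 := by
    by_contra hq; exact (RS_not_mem hT hq) (by linarith)
  have hcl' : ¬(cpa (Y - X) (Z - X) = 0 ∧ cpb (Y - X) (Z - X) = 0 ∧
      cpc (Y - X) (Z - X) = 0) := hCL
  obtain ⟨al, be, hw1⟩ := exists_span hab.1 hcl'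
  obtain ⟨ga, de, hw2⟩ := exists_span hab.2 hcl'
  have hXc : X - Pt ci = (-al) • (Y - X) + (-be) • (Z - X) := by
    funext j
    have := congrFun hw1 j
    simp only [sub_app, add_app, smul_app] at this ⊢
    linarith
  have hYc : Y - Pt ci = (1 - al) • (Y - X) + (-be) • (Z - X) := by
    funext j
    have := congrFun hw1 j
    simp only [sub_app, add_app, smul_app] at this ⊢
    linarith
  have hZc : Z - Pt ci = (-al) • (Y - X) + (1 - be) • (Z - X) := by
    funext j
    have := congrFun hw1 j
    simp only [sub_app, add_app, smul_app] at this ⊢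
    linarith
  exact ⟨d3_span ⟨_, _, hXc⟩ ⟨_, _, hYc⟩ ⟨_, _, hw2⟩,
    d3_span ⟨_, _, hXc⟩ ⟨_, _, hZc⟩ ⟨_, _, hw2⟩,
    d3_span ⟨_, _, hYc⟩ ⟨_, _, hZc⟩ ⟨_, _, hw2⟩⟩

/-- generic choice keeps new point off planes spanned by other lines and old points -/
lemma claim5_lem {Y : F3} {ci cm T : ℝ} (hT : T ∉ badK5 Y ci cm) (hcm : ci ≠ cm)
    (hY : Y 2 ≠ cm) : d3 (qp ci T - Pt cm) (Y - Pt cm) (Dr cm) ≠ 0 := by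
  intro hval
  rw [show qp ci T - Pt cm = (Pt ci - Pt cm) + T • Dr ci from qp_sub ci T (Pt cm),
    d3_affine1] at hval
  have hab : d3 (Pt ci - Pt cm) (Y - Pt cm) (Dr cm) = 0 ∧
      d3 (Dr ci) (Y - Pt cm) (Dr cm) = 0 := by
    by_contra hq; exact (RS_not_mem hT hq) (by linarith)
  -- dot products of the cross vector
  have hdm : d3 (Dr cm) (Y - Pt cm) (Dr cm) = 0 := d3_131 _ _
  rw [d3_expand1] at hdm
  have hdi := hab.2
  rw [d3_expand1] at hdi
  have hpt := hab.1
  rw [d3_expand1] at hpt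
  simp only [Dr_0, Dr_1, Dr_2, Pt_0, Pt_1, Pt_2, sub_app] at hdm hdi hpt
  -- solve: c0 + cm*c1 = 0, c0 + ci*c1 = 0, (ci - cm)*c2 = 0
  set c0 := cpa (Y - Pt cm) (Dr cm)
  set c1 := cpb (Y - Pt cm) (Dr cm)
  set c2 := cpc (Y - Pt cm) (Dr cm)
  have hsub : cm - ci ≠ 0 := sub_ne_zero.mpr (Ne.symm hcm)
  have hc1 : c1 = 0 := by
    have : c1 * (cm - ci) = 0 := by linarith
    exact (mul_eq_zero.mp this).resolve_right hsub
  have hc0 : c0 = 0 := by rw [hc1] at hdm; linarith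
  have hc2 : c2 = 0 := by
    have : c2 * (ci - cm) = 0 := by linarith
    exact (mul_eq_zero.mp this).resolve_right (sub_ne_zero.mpr hcm)
  obtain ⟨lam, hlam⟩ := exists_par hc0 hc1 hc2 (Dr_ne_zero cm)
  have : Y 2 = cm := by
    have := congrFun hlam 2
    simp only [sub_app, smul_app] at this
    simp at this
    linarith
  exact hY this

end DirB1

section DirB2

lemma cL_swap23 {x y z : F3} : CL x y z ↔ CL x z y := cL_rot.trans (cL_rot.trans cL_comm)
lemma cPL_move1 {w x y z : F3} : CPL w x y z ↔ CPL x y z w :=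
  cPL_comm1.trans (cPL_comm2.trans cPL_comm3)
lemma cPL_move2 {w x y z : F3} : CPL x w y z ↔ CPL x y z w := cPL_comm2.trans cPL_comm3

variable {V : Type*} [Fintype V] {r : ℕ}

def lci {r : ℕ} (i : Fin r) : ℝ := ((i : ℕ) : ℝ)

lemma lci_inj {r : ℕ} {i j : Fin r} (h : i ≠ j) : lci i ≠ lci j := by
  intro hh
  exact h (Fin.ext (Nat.cast_injective hh))

def posn (f : V → Fin r) (t : V → ℝ) (v : V) : F3 := qp (lci (f v)) (t v)

lemma posn_0 (f : V → Fin r) (t : V → ℝ) (v : V) : posn f t v 0 = t v := by simp [posn]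
lemma posn_2 (f : V → Fin r) (t : V → ℝ) (v : V) : posn f t v 2 = lci (f v) := by simp [posn]

structure Inv (f : V → Fin r) (g : V → ℕ) (s : Finset V) (t : V → ℝ) : Prop where
  ord : ∀ u ∈ s, ∀ v ∈ s, f u = f v → (t u < t v ↔ g u < g v)
  k2 : ∀ u ∈ s, ∀ v ∈ s, ∀ w ∈ s, u ≠ v → u ≠ w → v ≠ w →
    ¬(f u = f v ∧ f v = f w) → ¬ CL (posn f t u) (posn f t v) (posn f t w)
  k3 : ∀ u ∈ s, ∀ v ∈ s, ∀ w ∈ s, ∀ x ∈ s,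
    u ≠ v → u ≠ w → u ≠ x → v ≠ w → v ≠ x → w ≠ x →
    ¬(f u = f v ∧ f v = f w) → ¬(f u = f v ∧ f v = f x) →
    ¬(f u = f w ∧ f w = f x) → ¬(f v = f w ∧ f w = f x) →
    ¬ CPL (posn f t u) (posn f t v) (posn f t w) (posn f t x)
  k5 : ∀ m : Fin r, ∀ u ∈ s, ∀ v ∈ s, u ≠ v → f u ≠ m → f v ≠ m →
    d3 (posn f t u - Pt (lci m)) (posn f t v - Pt (lci m)) (Dr (lci m)) ≠ 0

lemma posn_inj {f : V → Fin r} {g : V → ℕ} {s : Finset V} {t : V → ℝ}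
    (hg1 : ∀ u v : V, f u = f v → g u = g v → u = v) (hI : Inv f g s t) :
    ∀ u ∈ s, ∀ v ∈ s, u ≠ v → posn f t u ≠ posn f t v := by
  intro u hu v hv huv heq
  by_cases hf : f u = f v
  · have h0 : t u = t v := by
      have := congrFun heq 0
      rwa [posn_0, posn_0] at this
    have h1 : ¬ g u < g v := fun hh => absurd ((hI.ord u hu v hv hf).mpr hh) (by rw [h0]; exact lt_irrefl _)
    have h2 : ¬ g v < g u := fun hh => absurd ((hI.ord v hv u hu hf.symm).mpr hh) (by rw [h0]; exact lt_irrefl _)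
    exact huv (hg1 u v hf (by omega))
  · have h2 : posn f t u 2 = posn f t v 2 := congrFun heq 2
    rw [posn_2, posn_2] at h2
    exact lci_inj hf h2

lemma ext_step [DecidableEq V] (f : V → Fin r) (g : V → ℕ) (hg1 : ∀ u v : V, f u = f v → g u = g v → u = v)
    (s : Finset V) (a : V) (ha : a ∉ s) (hmax : ∀ v ∈ s, g v ≤ g a) (t' : V → ℝ)
    (hI : Inv f g s t') : ∃ t : V → ℝ, Inv f g (insert a s) t := by
  classical
  set i := f a with hi
  set ci := lci i with hci
  have hMex : ∃ M : ℝ, ∀ v ∈ s, t' v < M := by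
    obtain ⟨M0, hM0⟩ := (Set.toFinite (t' '' ↑s)).bddAbove
    exact ⟨M0 + 1, fun v hv => lt_of_le_of_lt (hM0 ⟨v, hv, rfl⟩) (by linarith)⟩
  obtain ⟨M, hM⟩ := hMex
  set Bad : Set ℝ :=
    ((⋃ x ∈ s, ⋃ y ∈ s, badK2 (posn f t' x) (posn f t' y) ci) ∪
     (⋃ x ∈ s, ⋃ y ∈ s, ⋃ z ∈ s, badK3 (posn f t' x) (posn f t' y) (posn f t' z) ci)) ∪
    (⋃ m : Fin r, ⋃ y ∈ s, badK5 (posn f t' y) ci (lci m)) with hBad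
  have hBadFin : Bad.Finite := by
    refine Set.Finite.union (Set.Finite.union ?_ ?_) ?_
    · exact s.finite_toSet.biUnion fun x _ => s.finite_toSet.biUnion fun y _ => badK2_finite _ _ _
    · exact s.finite_toSet.biUnion fun x _ => s.finite_toSet.biUnion fun y _ =>
        s.finite_toSet.biUnion fun z _ => badK3_finite _ _ _ _
    · exact Set.finite_iUnion fun m => s.finite_toSet.biUnion fun y _ => badK5_finite _ _ _
  obtain ⟨T, hTM, hTB⟩ := ((Set.Ioi_infinite M).diff hBadFin).nonempty
  rw [Set.mem_Ioi] at hTM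
  set t := Function.update t' a T with htdef
  have hva : ∀ v ∈ s, v ≠ a := fun v hv hh => ha (hh ▸ hv)
  have hpos_other : ∀ v ∈ s, posn f t v = posn f t' v := by
    intro v hv
    unfold posn
    rw [htdef, Function.update_of_ne (hva v hv)]
  have ht_other : ∀ v ∈ s, t v = t' v := fun v hv => Function.update_of_ne (hva v hv) _ _
  have ht_a : t a = T := Function.update_self _ _ _
  have hpos_a : posn f t a = qp ci T := by unfold posn; rw [ht_a, ← hi, ← hci]
  have hB2 : ∀ x ∈ s, ∀ y ∈ s, T ∉ badK2 (posn f t' x) (posn f t' y) ci := by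
    intro x hx y hy hmem
    exact hTB (Or.inl (Or.inl (Set.mem_biUnion hx (Set.mem_biUnion hy hmem))))
  have hB3 : ∀ x ∈ s, ∀ y ∈ s, ∀ z ∈ s,
      T ∉ badK3 (posn f t' x) (posn f t' y) (posn f t' z) ci := by
    intro x hx y hy z hz hmem
    exact hTB (Or.inl (Or.inr (Set.mem_biUnion hx (Set.mem_biUnion hy (Set.mem_biUnion hz hmem)))))
  have hB5 : ∀ (m : Fin r), ∀ y ∈ s, T ∉ badK5 (posn f t' y) ci (lci m) := by
    intro m y hy hmem
    exact hTB (Or.inr (Set.mem_iUnion.mpr ⟨m, Set.mem_biUnion hy hmem⟩))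
  have hfz : ∀ v, f v ≠ i → posn f t' v 2 ≠ ci := by
    intro v hv
    rw [posn_2]
    exact lci_inj hv
  have hpinj := posn_inj hg1 hI
  -- canonical claims
  have hC2 : ∀ x ∈ s, ∀ y ∈ s, x ≠ y → ¬(f x = f y ∧ f y = i) →
      ¬ CL (posn f t' x) (posn f t' y) (qp ci T) := by
    intro x hx y hy hxy hcond
    apply claim2_lem (hB2 x hx y hy) (hpinj x hx y hy hxy)
    by_cases h1 : f x = i
    · right
      exact hfz y (fun h2 => hcond ⟨h1.trans h2.symm, h2⟩)
    · left
      exact hfz x h1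
  have hC3 : ∀ x ∈ s, ∀ y ∈ s, ∀ z ∈ s, x ≠ y → x ≠ z → y ≠ z →
      ¬(f x = f y ∧ f y = f z) → ¬(f x = f y ∧ f y = i) → ¬(f x = f z ∧ f z = i) →
      ¬(f y = f z ∧ f z = i) →
      ¬ CPL (posn f t' x) (posn f t' y) (posn f t' z) (qp ci T) := by
    intro x hx y hy z hz hxy hxz hyz h0 hcxy hcxz hcyz hcop
    obtain ⟨e1, e2, e3⟩ := claim3_lem (hB3 x hx y hy z hz)
      (hI.k2 x hx y hy z hz hxy hxz hyz h0) hcop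
    by_cases hfx : f x = i
    · have hfy : f y ≠ i := fun h => hcxy ⟨hfx.trans h.symm, h⟩
      have hfzz : f z ≠ i := fun h => hcxz ⟨hfx.trans h.symm, h⟩
      exact hI.k5 i y hy z hz hyz hfy hfzz e3
    · by_cases hfy : f y = i
      · have hfzz : f z ≠ i := fun h => hcyz ⟨hfy.trans h.symm, h⟩
        exact hI.k5 i x hx z hz hxz hfx hfzz e2
      · exact hI.k5 i x hx y hy hxy hfx hfy e1
  have hC5 : ∀ m : Fin r, m ≠ i → ∀ y ∈ s, f y ≠ m →
      d3 (qp ci T - Pt (lci m)) (posn f t' y - Pt (lci m)) (Dr (lci m)) ≠ 0 := by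
    intro m hm y hy hfy
    exact claim5_lem (hB5 m y hy) (lci_inj (Ne.symm hm)) (by rw [posn_2]; exact lci_inj hfy)
  refine ⟨t, ?_, ?_, ?_, ?_⟩
  · -- ord
    intro u hu v hv hf
    rcases Finset.mem_insert.mp hu with rfl | hu' <;> rcases Finset.mem_insert.mp hv with rfl | hv'
    · exact ⟨fun h => absurd h (lt_irrefl _), fun h => absurd h (lt_irrefl _)⟩
    · rw [ht_a, ht_other v hv']
      have h1 : ¬ T < t' v := by have := hM v hv'; linarith
      have h2 : ¬ g u < g v := by
        have hle := hmax v hv'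
        have : g v ≠ g u := fun h => (hva v hv') (hg1 v u hf.symm h)
        omega
      exact ⟨fun h => absurd h h1, fun h => absurd h h2⟩
    · rw [ht_a, ht_other u hu']
      have h1 : t' u < T := by have := hM u hu'; linarith
      have h2 : g u < g v := by
        have hle := hmax u hu'
        have : g u ≠ g v := fun h => (hva u hu') (hg1 u v hf h)
        omega
      exact ⟨fun _ => h2, fun _ => h1⟩
    · rw [ht_other u hu', ht_other v hv']
      exact hI.ord u hu' v hv' hf
  · -- k2
    intro u hu v hv w hw huv huw hvw hcond
    rcases Finset.mem_insert.mp hu with rfl | hu' <;>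
      rcases Finset.mem_insert.mp hv with rfl | hv' <;>
        rcases Finset.mem_insert.mp hw with rfl | hw'
    · exact absurd rfl huv
    · exact absurd rfl huv
    · exact absurd rfl huw
    · -- u = a
      rw [hpos_a, hpos_other v hv', hpos_other w hw', cL_rot]
      apply hC2 v hv' w hw' hvw
      rintro ⟨h1, h2⟩
      exact hcond ⟨(h1.trans h2).symm, h1⟩
    · exact absurd rfl hvw
    · -- v = a
      rw [hpos_a, hpos_other u hu', hpos_other w hw', cL_swap23]
      apply hC2 u hu' w hw' huw
      rintro ⟨h1, h2⟩
      exact hcond ⟨h1.trans h2, h2.symm⟩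
    · -- w = a
      rw [hpos_a, hpos_other u hu', hpos_other v hv']
      apply hC2 u hu' v hv' huv
      rintro ⟨h1, h2⟩
      exact hcond ⟨h1, h2⟩
    · rw [hpos_other u hu', hpos_other v hv', hpos_other w hw']
      exact hI.k2 u hu' v hv' w hw' huv huw hvw hcond
  · -- k3
    intro u hu v hv w hw x hx huv huw hux hvw hvx hwx hc1 hc2 hc3 hc4
    rcases Finset.mem_insert.mp hu with rfl | hu' <;>
      rcases Finset.mem_insert.mp hv with rfl | hv' <;>
        rcases Finset.mem_insert.mp hw with rfl | hw' <;>
          rcases Finset.mem_insert.mp hx with rfl | hx'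
    · exact absurd rfl huv
    · exact absurd rfl huv
    · exact absurd rfl huv
    · exact absurd rfl huv
    · exact absurd rfl huw
    · exact absurd rfl huw
    · exact absurd rfl hux
    · -- u = a
      rw [hpos_a, hpos_other v hv', hpos_other w hw', hpos_other x hx', cPL_move1]
      apply hC3 v hv' w hw' x hx' hvw hvx hwx hc4
      · rintro ⟨h1, h2⟩; exact hc1 ⟨(h1.trans h2).symm, h1⟩
      · rintro ⟨h1, h2⟩; exact hc2 ⟨(h1.trans h2).symm, h1⟩
      · rintro ⟨h1, h2⟩; exact hc3 ⟨(h1.trans h2).symm, h1⟩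
    · exact absurd rfl hvw
    · exact absurd rfl hvw
    · exact absurd rfl hvx
    · -- v = a
      rw [hpos_a, hpos_other u hu', hpos_other w hw', hpos_other x hx', cPL_move2]
      apply hC3 u hu' w hw' x hx' huw hux hwx hc3
      · rintro ⟨h1, h2⟩; exact hc1 ⟨h1.trans h2, h2.symm⟩
      · rintro ⟨h1, h2⟩; exact hc2 ⟨h1.trans h2, h2.symm⟩
      · rintro ⟨h1, h2⟩; exact hc4 ⟨(h1.trans h2).symm, h1⟩
    · exact absurd rfl hwx
    · -- w = a
      rw [hpos_a, hpos_other u hu', hpos_other v hv', hpos_other x hx', cPL_comm3]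
      apply hC3 u hu' v hv' x hx' huv hux hvx hc2 hc1
      · rintro ⟨h1, h2⟩; exact hc3 ⟨h1.trans h2, h2.symm⟩
      · rintro ⟨h1, h2⟩; exact hc4 ⟨h1.trans h2, h2.symm⟩
    · -- x = a
      rw [hpos_a, hpos_other u hu', hpos_other v hv', hpos_other w hw']
      exact hC3 u hu' v hv' w hw' huv huw hvw hc1 hc2 hc3 hc4
    · rw [hpos_other u hu', hpos_other v hv', hpos_other w hw', hpos_other x hx']
      exact hI.k3 u hu' v hv' w hw' x hx' huv huw hux hvw hvx hwx hc1 hc2 hc3 hc4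
  · -- k5
    intro m u hu v hv huv hfu hfv
    rcases Finset.mem_insert.mp hu with rfl | hu' <;> rcases Finset.mem_insert.mp hv with rfl | hv'
    · exact absurd rfl huv
    · rw [hpos_a, hpos_other v hv']
      exact hC5 m (fun h => hfu (h ▸ rfl)) v hv' hfv
    · rw [hpos_a, hpos_other u hu']
      intro h
      rw [d3_swap12] at h
      exact hC5 m (fun hh => hfv (hh ▸ rfl)) u hu' hfu (neg_eq_zero.mp h)
    · rw [hpos_other u hu', hpos_other v hv']
      exact hI.k5 m u hu' v hv' huv hfu hfv

lemma ext_all [DecidableEq V] (f : V → Fin r) (g : V → ℕ)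
    (hg1 : ∀ u v : V, f u = f v → g u = g v → u = v) (s : Finset V) :
    ∃ t : V → ℝ, Inv f g s t := by
  classical
  have claim : ∀ (n : ℕ) (s : Finset V), s.card = n → ∃ t, Inv f g s t := by
    intro n
    induction n using Nat.strong_induction_on with
    | _ n ih =>
      intro s hcard
      rcases Finset.eq_empty_or_nonempty s with rfl | hsne
      · exact ⟨fun _ => 0, by
          refine ⟨?_, ?_, ?_, ?_⟩
          · intro u hu; simp at hu
          · intro u hu; simp at hu
          · intro u hu; simp at hu
          · intro m u hu; simp at hu⟩
      obtain ⟨a, has, hamax⟩ := s.exists_max_image g hsne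
      have hcard' : (s.erase a).card < n := by
        rw [Finset.card_erase_of_mem has]
        have := Finset.card_pos.mpr hsne
        omega
      obtain ⟨t', hI⟩ := ih _ hcard' (s.erase a) rfl
      obtain ⟨t, hInv⟩ := ext_step f g hg1 (s.erase a) a (Finset.notMem_erase a s)
        (fun v hv => hamax v (Finset.mem_of_mem_erase hv)) t' hI
      rw [Finset.insert_erase has] at hInv
      exact ⟨t, hInv⟩
  exact claim s.card s rfl

end DirB2

section DirB3

lemma seg_z_endpoint {A B x : F3} {c : ℝ} (hx : x ∈ segment ℝ A B) (hxz : x 2 = c)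
    (hA : A 2 = c) (hB : B 2 ≠ c) : x = A := by
  obtain ⟨θ, h0, h1, hxe⟩ := seg_param hx
  have h2 : x 2 = A 2 + θ * (B 2 - A 2) := by
    rw [hxe]; simp [add_app, smul_app, sub_app]
  have hθ : θ * (B 2 - c) = 0 := by rw [hA] at h2; rw [hxz] at h2; linarith
  have : θ = 0 := by
    rcases mul_eq_zero.mp hθ with h | h
    · exact h
    · exact absurd (by linarith : B 2 = c) hB
  rw [hxe, this, zero_smul, add_zero]

lemma qp_z (c T : ℝ) : qp c T 2 = c := qp_2 c T

variable {V : Type*} [Fintype V] {G : SimpleGraph V} {r : ℕ}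

lemma dirB (f : V → Fin r) (hf : ∀ i, IsLinearForest (G.induce (f ⁻¹' {i}))) :
    Nonempty (WeakLineCover G r) := by
  classical
  -- build the enumeration g
  have hch : ∀ i : Fin r, ∃ gi : ↥(f ⁻¹' {i}) → ℕ, Function.Injective gi ∧
      ∀ a b, (G.induce (f ⁻¹' {i})).Adj a b → gi a = gi b + 1 ∨ gi b = gi a + 1 := by
    intro i
    haveI : Fintype ↥(f ⁻¹' {i}) := Fintype.ofFinite _
    exact lf_enum _ (hf i).1 (hf i).2
  choose gg hggInj hggAdj using hch
  set gt : Fin r → V → ℕ := fun i v => if h : f v = i then gg i ⟨v, h⟩ else 0 with hgt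
  set g : V → ℕ := fun v => gt (f v) v with hg
  have hgval : ∀ (i : Fin r) (v : V) (h : f v = i), gt i v = gg i ⟨v, h⟩ := by
    intro i v h
    simp only [hgt, dif_pos h]
  have hg1 : ∀ u v : V, f u = f v → g u = g v → u = v := by
    intro u v hfe hge
    rw [hg] at hge
    simp only at hge
    rw [← hfe, hgval (f u) u rfl, hgval (f u) v hfe.symm] at hge
    have := hggInj (f u) hge
    exact congrArg Subtype.val this
  have hg2 : ∀ u v : V, G.Adj u v → f u = f v → g u = g v + 1 ∨ g v = g u + 1 := by
    intro u v hadj hfe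
    have hadj' : (G.induce (f ⁻¹' {f u})).Adj ⟨u, rfl⟩ ⟨v, hfe.symm⟩ := hadj
    have := hggAdj (f u) _ _ hadj'
    rw [hg]
    simp only
    rw [← hfe, hgval (f u) u rfl, hgval (f u) v hfe.symm]
    exact this
  -- choose generic parameters
  obtain ⟨t, hInv⟩ := ext_all f g hg1 Finset.univ
  have ordT : ∀ u v : V, f u = f v → (t u < t v ↔ g u < g v) :=
    fun u v h => hInv.ord u (Finset.mem_univ u) v (Finset.mem_univ v) h
  have k2T : ∀ u v w : V, u ≠ v → u ≠ w → v ≠ w → ¬(f u = f v ∧ f v = f w) →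
      ¬ CL (posn f t u) (posn f t v) (posn f t w) :=
    fun u v w h1 h2 h3 h4 => hInv.k2 u (Finset.mem_univ u) v (Finset.mem_univ v)
      w (Finset.mem_univ w) h1 h2 h3 h4
  have k3T : ∀ u v w x : V, u ≠ v → u ≠ w → u ≠ x → v ≠ w → v ≠ x → w ≠ x →
      ¬(f u = f v ∧ f v = f w) → ¬(f u = f v ∧ f v = f x) →
      ¬(f u = f w ∧ f w = f x) → ¬(f v = f w ∧ f w = f x) →
      ¬ CPL (posn f t u) (posn f t v) (posn f t w) (posn f t x) :=
    fun u v w x h1 h2 h3 h4 h5 h6 c1 c2 c3 c4 => hInv.k3 u (Finset.mem_univ u)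
      v (Finset.mem_univ v) w (Finset.mem_univ w) x (Finset.mem_univ x)
      h1 h2 h3 h4 h5 h6 c1 c2 c3 c4
  set pos : V → F3 := posn f t with hpos
  have hposinj : Function.Injective pos := by
    intro u v h
    by_contra hne
    exact posn_inj hg1 hInv u (Finset.mem_univ u) v (Finset.mem_univ v) hne h
  have hposq : ∀ v : V, pos v = qp (lci (f v)) (t v) := fun v => rfl
  have hposz : ∀ v : V, pos v 2 = lci (f v) := fun v => posn_2 f t v
  -- ordering transfer
  have hmono : ∀ u v : V, f u = f v → g u < g v → t u < t v := fun u v h hg => (ordT u v h).mpr hg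
  -- the within-line consecutive structure of edges
  -- shared endpoint lemma
  have hshared : ∀ (p c d : V) (x : F3), G.Adj p c → G.Adj p d → c ≠ d →
      x ∈ segment ℝ (pos p) (pos c) → x ∈ segment ℝ (pos p) (pos d) → x = pos p := by
    intro p c d x hpc hpd hcd hx1 hx2
    by_cases hcase : f p = f c ∧ f c = f d
    · -- all on the same line
      obtain ⟨h1, h2⟩ := hcase
      have hgc := hg2 p c hpc h1
      have hgd := hg2 p d hpd (h1.trans h2)
      have hgcd : g c ≠ g d := fun h => hcd (hg1 c d h2 h)
      -- c and d are on opposite sides of p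
      have hside : (t c < t p ∧ t p < t d) ∨ (t d < t p ∧ t p < t c) := by
        rcases hgc with h | h <;> rcases hgd with h' | h'
        · exact absurd (by omega : g c = g d) hgcd
        · exact Or.inl ⟨hmono c p h1.symm (by omega), hmono p d (h1.trans h2) (by omega)⟩
        · exact Or.inr ⟨hmono d p (h1.trans h2).symm (by omega),
            hmono p c h1 (by omega)⟩
        · exact absurd (by omega : g c = g d) hgcd
      -- transfer to segment parameters
      have hx1' : x ∈ segment ℝ (qp (lci (f p)) (t p)) (qp (lci (f p)) (t c)) := by
        rw [hposq p, hposq c, ← h1] at hx1; exact hx1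
      have hx2' : x ∈ segment ℝ (qp (lci (f p)) (t p)) (qp (lci (f p)) (t d)) := by
        rw [hposq p, hposq d, ← (h1.trans h2)] at hx2; exact hx2
      obtain ⟨θ1, ha1, hb1, hq1⟩ :=
        seg_line_param (p := Pt (lci (f p))) (d := Dr (lci (f p))) hx1'
      obtain ⟨θ2, ha2, hb2, hq2⟩ :=
        seg_line_param (p := Pt (lci (f p))) (d := Dr (lci (f p))) hx2'
      have hθeq : θ1 = θ2 := by
        have e1 : x 0 = θ1 := by rw [hq1]; simp [add_app, smul_app]
        have e2 : x 0 = θ2 := by rw [hq2]; simp [add_app, smul_app]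
        linarith
      have hθ : θ1 = t p := by
        rcases hside with ⟨hcp, hpd'⟩ | ⟨hdp, hpc'⟩
        · rw [min_eq_right hcp.le] at ha1
          rw [min_eq_left hpd'.le] at ha2
          rw [max_eq_left hcp.le] at hb1
          linarith
        · rw [max_eq_right hpc'.le] at hb1
          rw [max_eq_left hdp.le] at hb2
          rw [min_eq_left hpc'.le] at ha1
          linarith
      rw [hposq p, hq1, hθ]
      rfl
    · -- not all on one line: non-collinear
      exact seg_shared_endpoint hx1 hx2 (k2T p c d hpc.ne hpd.ne hcd hcase)
  -- a vertex of a part cannot be inside a same-line edge's parameter interval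
  have hinterval : ∀ (p q c : V) (θ : ℝ), G.Adj p q → f p = f q → f c = f p →
      c ≠ p → c ≠ q → θ = t c → min (t p) (t q) ≤ θ → θ ≤ max (t p) (t q) → False := by
    intro p q c θ hpq hfpq hfc hcp hcq hθ hmin hmax
    have hcons := hg2 p q hpq hfpq
    have h1 : g c ≠ g p := fun h => hcp (hg1 c p hfc h)
    have h2 : g c ≠ g q := fun h => hcq (hg1 c q (hfc.trans hfpq) h)
    have : (g c < g p ∧ g c < g q) ∨ (g p < g c ∧ g q < g c) := by omega
    rcases this with ⟨ha, hb⟩ | ⟨ha, hb⟩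
    · have t1 := hmono c p hfc ha
      have t2 := hmono c q (hfc.trans hfpq) hb
      have := lt_min t1 t2
      linarith
    · have t1 := hmono p c hfc.symm ha
      have t2 := hmono q c (hfc.trans hfpq).symm hb
      have := max_lt t1 t2
      linarith
  -- mixed case: edge within a line vs edge crossing lines
  have hmix : ∀ (p q c d : V) (x : F3), G.Adj p q → G.Adj c d → f p = f q → f c ≠ f d →
      p ≠ q → c ≠ d → p ≠ c → p ≠ d → q ≠ c → q ≠ d →
      x ∈ segment ℝ (pos p) (pos q) → x ∈ segment ℝ (pos c) (pos d) → False := by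
    intro p q c d x hpq hcd hfpq hfcd hpq' hcd' hpc hpd hqc hqd hx1 hx2
    have hx1' : x ∈ segment ℝ (qp (lci (f p)) (t p)) (qp (lci (f p)) (t q)) := by
      rw [hposq p, hposq q, ← hfpq] at hx1
      exact hx1
    obtain ⟨θ, hamin, hbmax, hxq⟩ :=
      seg_line_param (p := Pt (lci (f p))) (d := Dr (lci (f p))) hx1'
    have hxz : x 2 = lci (f p) := by rw [hxq]; simp [add_app, smul_app]
    by_cases hcf : f c = f p
    · -- c on the line, d not
      have hdf : f d ≠ f p := fun h => hfcd (hcf.trans h.symm)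
      have hxc : x = pos c :=
        seg_z_endpoint hx2 hxz (by rw [hposz c, hcf]) (by rw [hposz d]; exact lci_inj hdf)
      have hθc : θ = t c := by
        have e1 : x 0 = θ := by rw [hxq]; simp [add_app, smul_app]
        have e2 : x 0 = t c := by rw [hxc, hposq c]; simp
        linarith
      exact hinterval p q c θ hpq hfpq hcf (Ne.symm hpc) (Ne.symm hqc) hθc hamin hbmax
    · by_cases hdf : f d = f p
      · have hx2s : x ∈ segment ℝ (pos d) (pos c) := by
          rw [segment_symm] at hx2; exact hx2
        have hxd : x = pos d :=
          seg_z_endpoint hx2s hxz (by rw [hposz d, hdf]) (by rw [hposz c]; exact lci_inj hcf)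
        have hθd : θ = t d := by
          have e1 : x 0 = θ := by rw [hxq]; simp [add_app, smul_app]
          have e2 : x 0 = t d := by rw [hxd, hposq d]; simp
          linarith
        exact hinterval p q d θ hpq hfpq hdf (Ne.symm hpd) (Ne.symm hqd) hθd hamin hbmax
      · -- no three on a common line
        apply seg_disjoint_of_not_cPL hx1 hx2
        apply k3T p q c d hpq' hpc hpd hqc hqd hcd'
        · rintro ⟨h1, h2⟩; exact hcf (h1.trans h2).symm
        · rintro ⟨h1, h2⟩; exact hdf (h1.trans h2).symm
        · rintro ⟨h1, h2⟩; exact hfcd h2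
        · rintro ⟨h1, h2⟩; exact hfcd h2
  refine ⟨⟨pos, hposinj, fun i => {x | ∃ T : ℝ, x = Pt (lci i) + T • Dr (lci i)},
    fun i => ⟨Pt (lci i), Dr (lci i), Dr_ne_zero _, rfl⟩,
    fun v => ⟨f v, ⟨t v, rfl⟩⟩, ?_⟩⟩
  intro u v a b huv hab hne x hx
  obtain ⟨hx1, hx2⟩ := hx
  have huv' : u ≠ v := huv.ne
  have hab' : a ≠ b := hab.ne
  by_cases hua : u = a
  · by_cases hvb : v = b
    · exact absurd (by rw [hua, hvb]) hne
    · refine ⟨u, Or.inl rfl, Or.inl hua, ?_⟩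
      apply hshared u v b x huv (by rw [hua]; exact hab) hvb hx1
      rw [hua]
      exact hx2
  · by_cases hub : u = b
    · by_cases hva : v = a
      · exact absurd (by rw [hub, hva, Set.pair_comm]) hne
      · refine ⟨u, Or.inl rfl, Or.inr hub, ?_⟩
        apply hshared u v a x huv (by rw [hub]; exact hab.symm) hva hx1
        rw [segment_symm] at hx2
        rw [hub]
        exact hx2
    · by_cases hva : v = a
      · refine ⟨v, Or.inr rfl, Or.inl hva, ?_⟩
        apply hshared v u b x huv.symm (by rw [hva]; exact hab) hub
        · rw [segment_symm] at hx1; exact hx1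
        · rw [hva]; exact hx2
      · by_cases hvb : v = b
        · refine ⟨v, Or.inr rfl, Or.inr hvb, ?_⟩
          apply hshared v u a x huv.symm (by rw [hvb]; exact hab.symm) hua
          · rw [segment_symm] at hx1; exact hx1
          · rw [segment_symm] at hx2; rw [hvb]; exact hx2
        · -- all four vertices distinct: segments are disjoint, contradiction
          exfalso
          by_cases huvf : f u = f v
          · by_cases habf : f a = f b
            · by_cases hfua : f u = f a
              · -- all four on the same line
                have hgu := hg2 u v huv huvf
                have hga := hg2 a b hab habf
                have hab2 : f a = f u := hfua.symm
                have g1 : g u ≠ g a := fun h => hua (hg1 u a hfua h)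
                have g2 : g u ≠ g b := fun h => hub (hg1 u b (hfua.trans habf) h)
                have g3 : g v ≠ g a := fun h => hva (hg1 v a (huvf.symm.trans hfua) h)
                have g4 : g v ≠ g b := fun h => hvb (hg1 v b (huvf.symm.trans (hfua.trans habf)) h)
                have hdisj : (g u < g a ∧ g u < g b ∧ g v < g a ∧ g v < g b) ∨
                    (g a < g u ∧ g b < g u ∧ g a < g v ∧ g b < g v) := by omega
                have hx1' : x ∈ segment ℝ (qp (lci (f u)) (t u)) (qp (lci (f u)) (t v)) := by
                  rw [hposq u, hposq v, ← huvf] at hx1; exact hx1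
                have hx2' : x ∈ segment ℝ (qp (lci (f u)) (t a)) (qp (lci (f u)) (t b)) := by
                  rw [hposq a, hposq b, ← habf, ← hfua] at hx2; exact hx2
                obtain ⟨θ1, ha1, hb1, hq1⟩ :=
                  seg_line_param (p := Pt (lci (f u))) (d := Dr (lci (f u))) hx1'
                obtain ⟨θ2, ha2, hb2, hq2⟩ :=
                  seg_line_param (p := Pt (lci (f u))) (d := Dr (lci (f u))) hx2'
                have hθeq : θ1 = θ2 := by
                  have e1 : x 0 = θ1 := by rw [hq1]; simp [add_app, smul_app]
                  have e2 : x 0 = θ2 := by rw [hq2]; simp [add_app, smul_app]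
                  linarith
                rcases hdisj with ⟨d1, d2, d3, d4⟩ | ⟨d1, d2, d3, d4⟩
                · have t1 := hmono u a hfua d1
                  have t2 := hmono u b (hfua.trans habf) d2
                  have t3 := hmono v a (huvf.symm.trans hfua) d3
                  have t4 := hmono v b (huvf.symm.trans (hfua.trans habf)) d4
                  have hlt : max (t u) (t v) < min (t a) (t b) :=
                    max_lt (lt_min t1 t2) (lt_min t3 t4)
                  linarith
                · have t1 := hmono a u hfua.symm d1
                  have t2 := hmono b u (hfua.trans habf).symm d2
                  have t3 := hmono a v (huvf.symm.trans hfua).symm d3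
                  have t4 := hmono b v (huvf.symm.trans (hfua.trans habf)).symm d4
                  have hlt : max (t a) (t b) < min (t u) (t v) :=
                    max_lt (lt_min t1 t3) (lt_min t2 t4)
                  linarith
              · -- two edges on two distinct lines
                have hx1' : x ∈ segment ℝ (qp (lci (f u)) (t u)) (qp (lci (f u)) (t v)) := by
                  rw [hposq u, hposq v, ← huvf] at hx1; exact hx1
                have hx2' : x ∈ segment ℝ (qp (lci (f a)) (t a)) (qp (lci (f a)) (t b)) := by
                  rw [hposq a, hposq b, ← habf] at hx2; exact hx2
                obtain ⟨θ1, _, _, hq1⟩ :=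
                  seg_line_param (p := Pt (lci (f u))) (d := Dr (lci (f u))) hx1'
                obtain ⟨θ2, _, _, hq2⟩ :=
                  seg_line_param (p := Pt (lci (f a))) (d := Dr (lci (f a))) hx2'
                have e1 : x 2 = lci (f u) := by rw [hq1]; simp [add_app, smul_app]
                have e2 : x 2 = lci (f a) := by rw [hq2]; simp [add_app, smul_app]
                exact lci_inj hfua (by linarith)
            · exact hmix u v a b x huv hab huvf habf huv' hab' hua hub hva hvb hx1 hx2
          · by_cases habf : f a = f b
            · exact hmix a b u v x hab huv habf huvf hab' huv' (Ne.symm hua) (Ne.symm hva)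
                (Ne.symm hub) (Ne.symm hvb) hx2 hx1
            · -- no edge within a line, no three vertices share a line
              apply seg_disjoint_of_not_cPL hx1 hx2
              apply k3T u v a b huv' hua hub hva hvb hab'
              · rintro ⟨h1, h2⟩; exact huvf h1
              · rintro ⟨h1, h2⟩; exact huvf h1
              · rintro ⟨h1, h2⟩; exact habf h2
              · rintro ⟨h1, h2⟩; exact habf h2

end DirB3

end LVAAux
end LVAAuxSec

/-- For every graph `G`, `π¹_3(G)` equals the linear vertex arboricity of `G`. -/
theorem stmt_11 {V : Type*} [Fintype V] (G : SimpleGraph V) :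
    pi13 G = lva G := by
  unfold pi13 lva
  congr 1
  ext k
  simp only [Set.mem_setOf_eq]
  constructor
  · rintro ⟨C⟩
    exact LVAAux.dirA C
  · rintro ⟨f, hf⟩
    exact LVAAux.dirB f hf
end
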